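/- arXiv:1502.03517 — 9 statements merged into one kernel-verified Lean document; each statement's English description precedes it below -/
import Mathlib

section
/- If r is a vector in R_α (i.e., r : C → ℕ satisfies r(S) ≥ |⋂_{j∈C\S} H_j^c| for all proper subsets S ⊊ C and ∑_{j∈C} r_j = α), and X, Y ⊊ C are tight sets of r (meaning r(X) = |⋂_{j∈C\X} H_j^c| and r(Y) = |⋂_{j∈C\Y} H_j^c|) with X ∩ Y ≠ ∅ and X ∪ Y ≠ C, then X ∩ Y is also a tight set of r. -/
/-- Number of packets missing at every client outside `S`. -/
def missing {β C : Type*} [DecidableEq β] [Fintype C] [DecidableEq C]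
    (P : Finset β) (H : C → Finset β) (S : Finset C) : ℕ :=
  (P.filter (fun p => ∀ j ∈ Finset.univ \ S, p ∈ P \ H j)).card

/-- The intersection of two crossing tight sets is tight. -/
theorem tight_inter_tight {β C : Type*} [DecidableEq β] [Fintype C] [DecidableEq C]
    (P : Finset β) (H : C → Finset β) (α : ℕ) (r : C → ℕ)
    (hfeas : ∀ S : Finset C, S ⊂ Finset.univ → missing P H S ≤ ∑ j ∈ S, r j)
    (hsum : ∑ j, r j = α)
    (X Y : Finset C) (hXss : X ⊂ Finset.univ) (hYss : Y ⊂ Finset.univ)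
    (hXt : ∑ j ∈ X, r j = missing P H X)
    (hYt : ∑ j ∈ Y, r j = missing P H Y)
    (hne : X ∩ Y ≠ ∅) (hcup : X ∪ Y ≠ Finset.univ) :
    ∑ j ∈ X ∩ Y, r j = missing P H (X ∩ Y) := by
  classical
  set A := P.filter (fun p => ∀ j ∈ Finset.univ \ X, p ∈ P \ H j) with hA
  set B := P.filter (fun p => ∀ j ∈ Finset.univ \ Y, p ∈ P \ H j) with hB
  have hinter : P.filter (fun p => ∀ j ∈ Finset.univ \ (X ∩ Y), p ∈ P \ H j) = A ∩ B := by
    ext p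
    simp only [hA, hB, Finset.mem_inter, Finset.mem_filter, Finset.mem_sdiff,
      Finset.mem_univ, true_and]
    constructor
    · rintro ⟨hp, h⟩
      exact ⟨⟨hp, fun j hj => h j (fun hmem => hj hmem.1)⟩,
             ⟨hp, fun j hj => h j (fun hmem => hj hmem.2)⟩⟩
    · rintro ⟨⟨hp, h1⟩, ⟨_, h2⟩⟩
      refine ⟨hp, fun j hj => ?_⟩
      by_cases hjX : j ∈ X
      · exact h2 j (fun hjY => hj ⟨hjX, hjY⟩)
      · exact h1 j hjX
  have hunion : A ∪ B ⊆ P.filter (fun p => ∀ j ∈ Finset.univ \ (X ∪ Y), p ∈ P \ H j) := by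
    intro p hp
    rcases Finset.mem_union.mp hp with h | h
    · simp only [hA, Finset.mem_filter, Finset.mem_sdiff, Finset.mem_univ, true_and] at h ⊢
      exact ⟨h.1, fun j hj => h.2 j (fun hjX => hj (Finset.mem_union_left _ hjX))⟩
    · simp only [hB, Finset.mem_filter, Finset.mem_sdiff, Finset.mem_univ, true_and] at h ⊢
      exact ⟨h.1, fun j hj => h.2 j (fun hjY => hj (Finset.mem_union_right _ hjY))⟩
  have hcardU : missing P H (X ∪ Y) ≥ (A ∪ B).card := Finset.card_le_card hunion
  have hcardI : missing P H (X ∩ Y) = (A ∩ B).card := by rw [missing, hinter]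
  have hsupermod : missing P H X + missing P H Y ≤
      missing P H (X ∩ Y) + missing P H (X ∪ Y) := by
    have : A.card + B.card = (A ∪ B).card + (A ∩ B).card :=
      (Finset.card_union_add_card_inter A B).symm
    have hAX : missing P H X = A.card := rfl
    have hBY : missing P H Y = B.card := rfl
    omega
  have hsumeq : ∑ j ∈ X, r j + ∑ j ∈ Y, r j =
      ∑ j ∈ X ∪ Y, r j + ∑ j ∈ X ∩ Y, r j :=
    (Finset.sum_union_inter).symm
  have hIss : X ∩ Y ⊂ Finset.univ :=
    lt_of_le_of_lt (Finset.inter_subset_left) hXss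
  have hUss : X ∪ Y ⊂ Finset.univ :=
    lt_of_le_of_ne (Finset.subset_univ _) hcup
  have h1 := hfeas (X ∩ Y) hIss
  have h2 := hfeas (X ∪ Y) hUss
  omega
end

section
/- If a set function f : 2^C → ℝ is submodular, then its base polyhedron B(f) = { x ∈ ℝ^C : x(S) ≤ f(S) for all S ⊆ C, x(C) = f(C) } has the property that for x, y ∈ B(f) and any u with x_u > y_u, the set of tight sets of x containing u but avoiding some v with x_v < y_v determines an exchange: there exists v with x_v < y_v and ε > 0 such that x − ε·e_u + ε·e_v ∈ B(f). (Exchange property of base polyhedra.) -/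
/-- Membership in the base polyhedron `B(f)`. -/
def memBase {C : Type*} [Fintype C] [DecidableEq C]
    (f : Finset C → ℝ) (x : C → ℝ) : Prop :=
  (∀ S : Finset C, ∑ j ∈ S, x j ≤ f S) ∧ ∑ j, x j = f Finset.univ

/-- Exchange property of base polyhedra of submodular functions. -/
theorem base_polyhedron_exchange {C : Type*} [Fintype C] [DecidableEq C]
    (f : Finset C → ℝ)
    (hsub : ∀ X Y : Finset C, f (X ∪ Y) + f (X ∩ Y) ≤ f X + f Y)
    (x y : C → ℝ) (hx : memBase f x) (hy : memBase f y)
    (u : C) (hu : y u < x u) :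
    ∃ v : C, x v < y v ∧ ∃ ε : ℝ, 0 < ε ∧
      memBase f (x - ε • (Pi.single u 1 : C → ℝ) + ε • (Pi.single v 1 : C → ℝ)) := by
  classical
  obtain ⟨hxle, hxeq⟩ := hx
  obtain ⟨hyle, hyeq⟩ := hy
  -- T : tight sets avoiding u; A : their union
  set T : Finset (Finset C) := Finset.univ.filter
    (fun S => u ∉ S ∧ ∑ j ∈ S, x j = f S) with hT
  set A : Finset C := T.sup id with hA
  have huA : u ∉ A := by
    intro hu'
    obtain ⟨S, hS, hus⟩ := Finset.mem_sup.mp hu'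
    exact ((Finset.mem_filter.mp hS).2.1) hus
  -- union of tight sets is tight or empty
  have key : ∀ t : Finset (Finset C), (∀ S ∈ t, ∑ j ∈ S, x j = f S) →
      (∑ j ∈ t.sup id, x j = f (t.sup id) ∨ t.sup id = ∅) := by
    intro t
    induction t using Finset.induction with
    | empty => intro _; right; simp
    | @insert S t' hnotmem ih =>
      intro ht
      have hS : ∑ j ∈ S, x j = f S := ht S (Finset.mem_insert_self _ _)
      have h' := ih (fun S' hS' => ht S' (Finset.mem_insert_of_mem hS'))
      rw [Finset.sup_insert]
      rcases h' with h' | h'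
      · left
        have h1 := hxle (S ∪ t'.sup id)
        have h2 := hxle (S ∩ t'.sup id)
        have h3 := hsub S (t'.sup id)
        have h4 : ∑ j ∈ S ∪ t'.sup id, x j + ∑ j ∈ S ∩ t'.sup id, x j
            = ∑ j ∈ S, x j + ∑ j ∈ t'.sup id, x j := Finset.sum_union_inter
        show ∑ j ∈ S ∪ t'.sup id, x j = f (S ∪ t'.sup id)
        linarith
      · left
        rw [h']
        simpa using hS
  have hAt : ∑ j ∈ A, x j = f A ∨ A = ∅ := by
    apply key
    intro S hS
    exact ((Finset.mem_filter.mp hS).2.2)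
  have hyA : ∑ j ∈ A, y j ≤ ∑ j ∈ A, x j := by
    rcases hAt with h | h
    · calc ∑ j ∈ A, y j ≤ f A := hyle A
        _ = ∑ j ∈ A, x j := h.symm
    · simp [h]
  -- find v with x v < y v outside A
  have hv : ∃ v, x v < y v ∧ v ∉ A := by
    by_contra h
    push_neg at h
    have hcomp : ∀ j ∈ Finset.univ \ A, y j ≤ x j := by
      intro j hj
      by_contra hlt
      push_neg at hlt
      exact (Finset.mem_sdiff.mp hj).2 (h j hlt)
    have hlt : ∑ j ∈ Finset.univ \ A, y j < ∑ j ∈ Finset.univ \ A, x j :=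
      Finset.sum_lt_sum hcomp ⟨u, Finset.mem_sdiff.mpr ⟨Finset.mem_univ u, huA⟩, hu⟩
    have hsx : ∑ j ∈ Finset.univ \ A, x j + ∑ j ∈ A, x j = ∑ j, x j :=
      Finset.sum_sdiff (Finset.subset_univ A)
    have hsy : ∑ j ∈ Finset.univ \ A, y j + ∑ j ∈ A, y j = ∑ j, y j :=
      Finset.sum_sdiff (Finset.subset_univ A)
    linarith
  obtain ⟨v, hxy, hvA⟩ := hv
  have hvu : v ≠ u := by
    intro h; rw [h] at hxy; linarith
  refine ⟨v, hxy, ?_⟩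
  -- sets that gain ε
  set 𝒮 : Finset (Finset C) := Finset.univ.filter (fun S => v ∈ S ∧ u ∉ S) with h𝒮
  have hmem : ({v} : Finset C) ∈ 𝒮 := by
    simp [h𝒮, hvu.symm]
  have hne : 𝒮.Nonempty := ⟨{v}, hmem⟩
  have hpos : ∀ S ∈ 𝒮, 0 < f S - ∑ j ∈ S, x j := by
    intro S hS
    rcases Finset.mem_filter.mp hS with ⟨-, hvS, huS⟩
    rcases lt_or_eq_of_le (hxle S) with h | h
    · linarith
    · exfalso
      have hST : S ∈ T := Finset.mem_filter.mpr ⟨Finset.mem_univ _, huS, h⟩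
      exact hvA (Finset.mem_sup.mpr ⟨S, hST, hvS⟩)
  set ε : ℝ := 𝒮.inf' hne (fun S => f S - ∑ j ∈ S, x j) with hε
  have hεpos : 0 < ε := by
    rw [hε, Finset.lt_inf'_iff]
    exact hpos
  refine ⟨ε, hεpos, ?_, ?_⟩
  · -- inequalities
    intro S
    have hsum : ∑ j ∈ S, (x - ε • (Pi.single u 1 : C → ℝ) + ε • (Pi.single v 1 : C → ℝ)) j
        = ∑ j ∈ S, x j - (if u ∈ S then ε else 0) + (if v ∈ S then ε else 0) := by
      simp only [Pi.add_apply, Pi.sub_apply, Pi.smul_apply, smul_eq_mul,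
        Finset.sum_add_distrib, Finset.sum_sub_distrib, ← Finset.mul_sum,
        Pi.single_apply, Finset.sum_ite_eq' S]
      by_cases h1 : u ∈ S <;> by_cases h2 : v ∈ S <;> simp [h1, h2]
    rw [hsum]
    by_cases h2 : v ∈ S
    · by_cases h1 : u ∈ S
      · simp only [h1, h2, if_pos]
        have := hxle S
        linarith
      · have hS𝒮 : S ∈ 𝒮 := Finset.mem_filter.mpr ⟨Finset.mem_univ _, h2, h1⟩
        have hle : ε ≤ f S - ∑ j ∈ S, x j := by
          rw [hε]; exact Finset.inf'_le _ hS𝒮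
        rw [if_neg h1, if_pos h2]
        linarith
    · have := hxle S
      by_cases h1 : u ∈ S <;> simp [h1, h2] <;> linarith
  · -- equality on univ
    have hsum : ∑ j, (x - ε • (Pi.single u 1 : C → ℝ) + ε • (Pi.single v 1 : C → ℝ)) j
        = ∑ j, x j - ε + ε := by
      simp only [Pi.add_apply, Pi.sub_apply, Pi.smul_apply, smul_eq_mul,
        Finset.sum_add_distrib, Finset.sum_sub_distrib, ← Finset.mul_sum,
        Pi.single_apply, Finset.sum_ite_eq' Finset.univ]
      simp
    rw [hsum]
    rw [hxeq]
    ring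
end

section
/- If B ⊆ ℤ^K is a nonempty set satisfying the M-convex exchange axiom and f(x) = ∑_j f_j(x_j) is a separable discretely convex function, then a point x* ∈ B is a global minimizer of f over B if and only if f(x*) ≤ f(x* − e_u + e_v) for all u, v such that x* − e_u + e_v ∈ B. (Local optimality over single exchanges implies global optimality.) -/
lemma diff_mono' (f : ℤ → ℝ) (h : ∀ t : ℤ, 2 * f t ≤ f (t - 1) + f (t + 1)) :
    ∀ s t : ℤ, s ≤ t → f (s + 1) - f s ≤ f (t + 1) - f t := by
  intro s t hst
  have H : ∀ n : ℕ, ∀ t : ℤ, t = s + n → f (s + 1) - f s ≤ f (t + 1) - f t := by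
    intro n
    induction n with
    | zero => intro t ht; simp at ht; subst ht; exact le_refl _
    | succ n ih =>
      intro t ht
      have h1 := ih (t - 1) (by push_cast at ht ⊢; omega)
      have h2 := h t
      have e1 : t - 1 + 1 = t := by ring
      rw [e1] at h1
      linarith
  exact H (t - s).toNat t (by omega)

lemma pair_ineq' (f : ℤ → ℝ) (h : ∀ t : ℤ, 2 * f t ≤ f (t - 1) + f (t + 1))
    (a b : ℤ) (hab : a < b) : f (a + 1) + f (b - 1) ≤ f a + f b := by
  have h1 := diff_mono' f h a (b - 1) (by omega)
  have : b - 1 + 1 = b := by ring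
  rw [this] at h1
  linarith

lemma dist_step' {K : ℕ} (x y : Fin K → ℤ) (t v : Fin K) (htv : t ≠ v)
    (ht : y t < x t) (hv : x v < y v) :
    ∑ j, (x j - ((y + Pi.single t 1 - Pi.single v 1 : Fin K → ℤ) j)).natAbs + 2
      = ∑ j, (x j - y j).natAbs := by
  have key : ∀ j, (x j - y j).natAbs
      = (x j - ((y + Pi.single t 1 - Pi.single v 1 : Fin K → ℤ) j)).natAbs
        + ((if j = t then 1 else 0) + (if j = v then 1 else 0)) := by
    intro j
    simp only [Pi.add_apply, Pi.sub_apply, Pi.single_apply]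
    by_cases h1 : j = t
    · subst h1
      rw [if_pos rfl, if_neg htv, if_pos rfl, if_neg htv]
      omega
    · rw [if_neg h1, if_neg h1]
      by_cases h2 : j = v
      · subst h2
        rw [if_pos rfl, if_pos rfl]
        omega
      · rw [if_neg h2, if_neg h2]
        omega
  rw [Finset.sum_congr rfl (fun j _ => key j), Finset.sum_add_distrib,
    Finset.sum_add_distrib]
  have hT : ∑ j : Fin K, (if j = t then (1:ℕ) else 0) = 1 := by
    simp [Finset.sum_ite_eq']
  have hV : ∑ j : Fin K, (if j = v then (1:ℕ) else 0) = 1 := by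
    simp [Finset.sum_ite_eq']
  rw [hT, hV]

lemma SE' {K : ℕ} (B : Set (Fin K → ℤ))
    (hex : ∀ x ∈ B, ∀ y ∈ B, ∀ u : Fin K, y u < x u →
      ∃ v : Fin K, x v < y v ∧ x - Pi.single u 1 + Pi.single v 1 ∈ B) :
    ∀ n : ℕ, ∀ x ∈ B, ∀ y ∈ B, (∑ j, (x j - y j).natAbs) = n →
      ∀ u : Fin K, y u < x u →
      ∃ v : Fin K, x v < y v ∧ (x - Pi.single u 1 + Pi.single v 1 ∈ B) ∧
        (y + Pi.single u 1 - Pi.single v 1 ∈ B) := by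
  intro n
  induction n using Nat.strong_induction_on with
  | _ n IH =>
  intro x hx y hy hd u hu
  obtain ⟨v, hv, hx1⟩ := hex x hx y hy u hu
  obtain ⟨t, ht, hy1⟩ := hex y hy x hx v hv
  by_cases htu : t = u
  · subst htu
    refine ⟨v, hv, hx1, ?_⟩
    have e1 : y + Pi.single t 1 - Pi.single v 1
        = y - Pi.single v 1 + Pi.single t 1 := by abel
    rw [e1]; exact hy1
  · have hvu : v ≠ u := by rintro rfl; omega
    have htv : t ≠ v := by rintro rfl; omega
    have hut : ¬ u = t := fun h => htu h.symm
    have huv : ¬ u = v := fun h => hvu h.symm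
    set y1 : Fin K → ℤ := y + Pi.single t 1 - Pi.single v 1 with hy1def
    have hy1mem : y1 ∈ B := by
      have e1 : y1 = y - Pi.single v 1 + Pi.single t 1 := by rw [hy1def]; abel
      rw [e1]; exact hy1
    have hy1u : y1 u = y u := by
      simp [hy1def, Pi.single_apply, hut, huv]
    have hy1v : y1 v = y v - 1 := by
      simp [hy1def, Pi.single_apply, htv]
    have hy1t : y1 t = y t + 1 := by
      simp [hy1def, Pi.single_apply, htv]
    have hy1other : ∀ j, j ≠ t → j ≠ v → y1 j = y j := by
      intro j h1 h2
      simp [hy1def, Pi.single_apply, h1, h2]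
    have hd1 : ∑ j, (x j - y1 j).natAbs + 2 = n := by
      rw [← hd, hy1def]
      exact dist_step' x y t v htv ht hv
    obtain ⟨v', hv', hxv', hyv'⟩ :=
      IH (n - 2) (by omega) x hx y1 hy1mem (by omega) u (by rw [hy1u]; exact hu)
    -- hv' : x v' < y1 v'
    have hv'u : ¬ v' = u := by
      rintro rfl
      rw [hy1u] at hv'; omega
    have hv't : ¬ v' = t := by
      rintro rfl
      rw [hy1t] at hv'; omega
    -- z := y1 + e u - e v' ∈ B (hyv')
    have hzt : (y1 + Pi.single u 1 - Pi.single v' 1 : Fin K → ℤ) t = y t + 1 := by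
      simp only [Pi.add_apply, Pi.sub_apply, Pi.single_apply]
      rw [if_neg htu, if_neg (fun h => hv't h.symm), hy1t]
      ring
    have hzu : (y1 + Pi.single u 1 - Pi.single v' 1 : Fin K → ℤ) u = y u + 1 := by
      simp only [Pi.add_apply, Pi.sub_apply, Pi.single_apply, if_true]
      rw [if_neg (fun h => hv'u h.symm), hy1u]
      ring
    have hzother : ∀ j, j ≠ t → j ≠ u → j ≠ v → j ≠ v' →
        (y1 + Pi.single u 1 - Pi.single v' 1 : Fin K → ℤ) j = y j := by
      intro j h1 h2 h3 h4
      simp only [Pi.add_apply, Pi.sub_apply, Pi.single_apply]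
      rw [if_neg h2, if_neg h4, hy1other j h1 h3]
      ring
    obtain ⟨s, hs, hz⟩ := hex (y1 + Pi.single u 1 - Pi.single v' 1) hyv' y hy t
      (by rw [hzt]; omega)
    -- hs : z s < y s forces s = v or s = v'
    have hsvv : s = v ∨ s = v' := by
      by_contra hcon
      push_neg at hcon
      obtain ⟨hs1, hs2⟩ := hcon
      by_cases hst : s = t
      · rw [hst, hzt] at hs; omega
      · by_cases hsu : s = u
        · rw [hsu, hzu] at hs; omega
        · rw [hzother s hst hsu hs1 hs2] at hs; omega
    by_cases hv'v : v' = v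
    · -- answer v: z - e t + e s with s forced to be v (or v')
      rw [hv'v] at hyv' hz hsvv
      have hsv : s = v := by rcases hsvv with h | h <;> exact h
      rw [hsv] at hz
      refine ⟨v, hv, hx1, ?_⟩
      have e1 : y1 + Pi.single u 1 - Pi.single v 1 - Pi.single t 1 + Pi.single v 1
          = y + Pi.single u 1 - Pi.single v 1 := by
        rw [hy1def]; abel
      rw [← e1]; exact hz
    · have hv'y : x v' < y v' := by
        rw [hy1other v' hv't hv'v] at hv'; exact hv'
      rcases hsvv with hsv | hsv
      · -- s = v: z - e t + e v = y + e u - e v' ∈ B, answer v'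
        rw [hsv] at hz
        refine ⟨v', hv'y, hxv', ?_⟩
        have e1 : y1 + Pi.single u 1 - Pi.single v' 1 - Pi.single t 1 + Pi.single v 1
            = y + Pi.single u 1 - Pi.single v' 1 := by
          rw [hy1def]; abel
        rw [← e1]; exact hz
      · -- s = v': z - e t + e v' = y + e u - e v ∈ B, answer v
        rw [hsv] at hz
        refine ⟨v, hv, hx1, ?_⟩
        have e1 : y1 + Pi.single u 1 - Pi.single v' 1 - Pi.single t 1 + Pi.single v' 1
            = y + Pi.single u 1 - Pi.single v 1 := by
          rw [hy1def]; abel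
        rw [← e1]; exact hz

/-- Local optimality over single exchanges is equivalent to global optimality
for a separable discretely convex function over an M-convex set. -/
theorem M_convex_local_global {K : ℕ} (hK : 0 < K)
    (B : Set (Fin K → ℤ)) (hne : B.Nonempty)
    (hex : ∀ x ∈ B, ∀ y ∈ B, ∀ u : Fin K, y u < x u →
      ∃ v : Fin K, x v < y v ∧ x - Pi.single u 1 + Pi.single v 1 ∈ B)
    (f : Fin K → ℤ → ℝ)
    (hconv : ∀ j : Fin K, ∀ t : ℤ, 2 * f j t ≤ f j (t - 1) + f j (t + 1))
    (x : Fin K → ℤ) (hx : x ∈ B) :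
    (∀ y ∈ B, ∑ j, f j (x j) ≤ ∑ j, f j (y j)) ↔
    (∀ u v : Fin K, x - Pi.single u 1 + Pi.single v 1 ∈ B →
      ∑ j, f j (x j) ≤ ∑ j, f j ((x - Pi.single u 1 + Pi.single v 1 : Fin K → ℤ) j)) := by
  constructor
  · intro hglob u v hmem
    exact hglob _ hmem
  · intro hloc
    suffices H : ∀ n : ℕ, ∀ y ∈ B, (∑ j, (x j - y j).natAbs) = n →
        ∑ j, f j (x j) ≤ ∑ j, f j (y j) by
      intro y hy
      exact H _ y hy rfl
    intro n
    induction n using Nat.strong_induction_on with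
    | _ n IH =>
    intro y hy hd
    by_cases hxy : x = y
    · rw [hxy]
    · have hexu : ∃ u, y u < x u := by
        by_contra hcon
        push_neg at hcon
        have hexw : ∃ w, x w < y w := by
          by_contra hcon2
          push_neg at hcon2
          exact hxy (funext fun j => le_antisymm (hcon j) (hcon2 j))
        obtain ⟨w, hw⟩ := hexw
        obtain ⟨v, hv, _⟩ := hex y hy x hx w hw
        exact absurd (hcon v) (not_le.mpr hv)
      obtain ⟨u, hu⟩ := hexu
      obtain ⟨v, hv, hx1, hy1⟩ := SE' B hex n x hx y hy hd u hu
      have huv : ¬ u = v := by rintro rfl; omega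
      have h1 : ∑ j, f j (x j)
          ≤ ∑ j, f j ((x - Pi.single u 1 + Pi.single v 1 : Fin K → ℤ) j) :=
        hloc u v hx1
      -- convexity: f(x') + f(y') ≤ f(x) + f(y)
      have h2 : ∑ j, f j ((x - Pi.single u 1 + Pi.single v 1 : Fin K → ℤ) j)
            + ∑ j, f j ((y + Pi.single u 1 - Pi.single v 1 : Fin K → ℤ) j)
          ≤ ∑ j, f j (x j) + ∑ j, f j (y j) := by
        rw [← Finset.sum_add_distrib, ← Finset.sum_add_distrib]
        apply Finset.sum_le_sum
        intro j _
        simp only [Pi.add_apply, Pi.sub_apply, Pi.single_apply]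
        split_ifs with hju hjv hjv
        · exact absurd (hju.symm.trans hjv) huv
        · subst hju
          simp only [add_zero, sub_zero]
          have := pair_ineq' (f j) (hconv j) (y j) (x j) hu
          linarith
        · subst hjv
          simp only [sub_zero, add_zero]
          have := pair_ineq' (f j) (hconv j) (x j) (y j) hv
          linarith
        · simp only [sub_zero, add_zero]
          exact le_of_eq rfl
      have hd1 : ∑ j, (x j - ((y + Pi.single u 1 - Pi.single v 1 : Fin K → ℤ) j)).natAbs + 2 = n := by
        rw [← hd]
        exact dist_step' x y u v (fun h => huv h) hu hv
      have h3 := IH (n - 2) (by omega) _ hy1 (by omega)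
      linarith
end

section
/- For any x, y in an M-convex set B ⊆ ℤ^K with x ≠ y, there exist u with x_u > y_u and v with x_v < y_v such that both x − e_u + e_v ∈ B and y + e_u − e_v ∈ B. (Simultaneous exchange property of M-convex sets.) -/
private lemma Mconvex_aux {K : ℕ} (B : Set (Fin K → ℤ))
    (hex : ∀ x ∈ B, ∀ y ∈ B, ∀ u : Fin K, y u < x u →
      ∃ v : Fin K, x v < y v ∧ x - Pi.single u 1 + Pi.single v 1 ∈ B) :
    ∀ d : ℕ, ∀ x ∈ B, ∀ y ∈ B, ∀ u : Fin K, y u < x u →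
      (∑ i, (x i - y i).natAbs) ≤ d →
      ∃ v : Fin K, x v < y v ∧
        x - Pi.single u 1 + Pi.single v 1 ∈ B ∧
        y + Pi.single u 1 - Pi.single v 1 ∈ B := by
  have ev : ∀ (f : Fin K → ℤ) (a b i : Fin K),
      ((f - Pi.single a 1 + Pi.single b 1 : Fin K → ℤ)) i
        = f i - (if i = a then 1 else 0) + (if i = b then 1 else 0) := by
    intro f a b i
    simp [Pi.single_apply]
  intro d
  induction d with
  | zero =>
    intro x hx y hy u hu hsum
    have h1 : (x u - y u).natAbs ≤ ∑ i, (x i - y i).natAbs :=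
      Finset.single_le_sum (f := fun i => (x i - y i).natAbs)
        (fun i _ => Nat.zero_le _) (Finset.mem_univ u)
    omega
  | succ d ih =>
    intro x hx y hy u hu hsum
    obtain ⟨v₁, hv₁, hx₁⟩ := hex x hx y hy u hu
    obtain ⟨u₁, hu₁, hy₁⟩ := hex y hy x hx v₁ hv₁
    by_cases huu : u₁ = u
    · subst huu
      refine ⟨v₁, hv₁, hx₁, ?_⟩
      have : y + Pi.single u₁ 1 - Pi.single v₁ 1
          = y - Pi.single v₁ 1 + Pi.single u₁ 1 := by abel
      rw [this]; exact hy₁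
    -- distinctness facts
    have huv₁ : u ≠ v₁ := by rintro rfl; omega
    have huu' : u ≠ u₁ := fun h => huu h.symm
    have hu₁v₁ : u₁ ≠ v₁ := by rintro rfl; omega
    set y₁ : Fin K → ℤ := y - Pi.single v₁ 1 + Pi.single u₁ 1 with hy₁def
    have hy₁eval : ∀ i, y₁ i = y i - (if i = v₁ then 1 else 0) + (if i = u₁ then 1 else 0) :=
      fun i => ev y v₁ u₁ i
    have hy₁u : y₁ u = y u := by rw [hy₁eval]; simp [huv₁, huu']
    -- sum decreases by 2
    have key : ∀ i, (x i - y i).natAbs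
        = (x i - y₁ i).natAbs + ((if i = v₁ then 1 else 0) + (if i = u₁ then 1 else 0)) := by
      intro i
      have h := hy₁eval i
      rcases eq_or_ne i v₁ with rfl | h1
      · rw [if_neg hu₁v₁.symm] at h ⊢
        rw [if_pos rfl] at h ⊢
        omega
      · rcases eq_or_ne i u₁ with rfl | h2
        · rw [if_neg h1] at h ⊢
          rw [if_pos rfl] at h ⊢
          omega
        · rw [if_neg h1, if_neg h2] at h ⊢
          omega
    have hsum2 : (∑ i, (x i - y₁ i).natAbs) + 2 = ∑ i, (x i - y i).natAbs := by
      rw [Finset.sum_congr rfl fun i _ => key i]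
      rw [Finset.sum_add_distrib, Finset.sum_add_distrib]
      simp [Finset.sum_ite_eq']
    have hsum3 : (∑ i, (x i - y₁ i).natAbs) ≤ d := by omega
    have hu' : y₁ u < x u := by rw [hy₁u]; exact hu
    obtain ⟨v, hv, hxv, hyv⟩ := ih x hx y₁ hy₁ u hu' hsum3
    -- v ≠ u₁
    have hvu₁ : v ≠ u₁ := by
      rintro rfl
      rw [hy₁eval, if_neg hu₁v₁, if_pos rfl] at hv
      omega
    have hvv : x v < y v := by
      rw [hy₁eval] at hv
      rw [if_neg hvu₁] at hv
      split_ifs at hv <;> omega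
    have huv : u ≠ v := by rintro rfl; omega
    -- one more exchange from y₂ := y₁ + e_u - e_v back to y
    set y₂ : Fin K → ℤ := y₁ + Pi.single u 1 - Pi.single v 1 with hy₂def
    have hy₂eval : ∀ i, y₂ i = y i - (if i = v₁ then 1 else 0) + (if i = u₁ then 1 else 0)
        + (if i = u then 1 else 0) - (if i = v then 1 else 0) := by
      intro i
      have : y₂ i = y₁ i + (if i = u then 1 else 0) - (if i = v then 1 else 0) := by
        simp [hy₂def, Pi.single_apply]
      rw [this, hy₁eval]
    have hu₁y₂ : y u₁ < y₂ u₁ := by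
      rw [hy₂eval]
      rw [if_neg hu₁v₁, if_pos rfl, if_neg huu, if_neg (fun h => hvu₁ h.symm)]
      omega
    obtain ⟨t, ht, hyt⟩ := hex y₂ hyv y hy u₁ hu₁y₂
    rcases eq_or_ne t v₁ with htv₁ | htv₁
    · -- answer is (u, v)
      refine ⟨v, hvv, hxv, ?_⟩
      have heq : y₂ - Pi.single u₁ 1 + Pi.single t 1 = y + Pi.single u 1 - Pi.single v 1 := by
        rw [htv₁, hy₂def, hy₁def]; abel
      rw [← heq]; exact hyt
    rcases eq_or_ne t v with htv | htv
    · -- answer is (u, v₁)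
      refine ⟨v₁, hv₁, hx₁, ?_⟩
      have heq : y₂ - Pi.single u₁ 1 + Pi.single t 1 = y + Pi.single u 1 - Pi.single v₁ 1 := by
        rw [htv, hy₂def, hy₁def]; abel
      rw [← heq]; exact hyt
    · exfalso
      rw [hy₂eval, if_neg htv₁, if_neg htv] at ht
      split_ifs at ht <;> omega

/-- Simultaneous exchange property of M-convex sets. -/
theorem M_convex_simultaneous_exchange {K : ℕ} (hK : 0 < K)
    (B : Set (Fin K → ℤ)) (hne : B.Nonempty)
    (hex : ∀ x ∈ B, ∀ y ∈ B, ∀ u : Fin K, y u < x u →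
      ∃ v : Fin K, x v < y v ∧ x - Pi.single u 1 + Pi.single v 1 ∈ B)
    (x y : Fin K → ℤ) (hx : x ∈ B) (hy : y ∈ B) (hxy : x ≠ y) :
    ∃ u v : Fin K, y u < x u ∧ x v < y v ∧
      x - Pi.single u 1 + Pi.single v 1 ∈ B ∧
      y + Pi.single u 1 - Pi.single v 1 ∈ B := by
  obtain ⟨w, hw⟩ := Function.ne_iff.mp hxy
  have : ∃ u : Fin K, y u < x u := by
    rcases lt_or_gt_of_ne hw with h | h
    · obtain ⟨u, hu, -⟩ := hex y hy x hx w h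
      exact ⟨u, hu⟩
    · exact ⟨w, h⟩
  obtain ⟨u, hu⟩ := this
  obtain ⟨v, hv, h1, h2⟩ :=
    Mconvex_aux B hex (∑ i, (x i - y i).natAbs) x hx y hy u hu le_rfl
  exact ⟨u, v, hu, hv, h1, h2⟩
end

section
/- Let g : 2^C → ℝ be submodular with g(∅) = 0 and integer-valued, and suppose B(g) ∩ ℤ^C is nonempty. Then B(g) ∩ ℤ^C (the integer points of the base polyhedron) satisfies the M-convex exchange axiom: for all integer x, y ∈ B(g) and u with x_u > y_u, there exists v with x_v < y_v such that x − e_u + e_v ∈ B(g) ∩ ℤ^C. -/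
/-- An integer point of the base polyhedron of an integer-valued submodular
function. -/
def memBaseInt {C : Type*} [Fintype C] [DecidableEq C]
    (g : Finset C → ℤ) (x : C → ℤ) : Prop :=
  (∀ S : Finset C, ∑ j ∈ S, x j ≤ g S) ∧ ∑ j, x j = g Finset.univ

/-- Tight sets are closed under union. -/
lemma tight_union {C : Type*} [Fintype C] [DecidableEq C]
    (g : Finset C → ℤ)
    (hsub : ∀ X Y : Finset C, g (X ∪ Y) + g (X ∩ Y) ≤ g X + g Y)
    (x : C → ℤ) (hfeas : ∀ S : Finset C, ∑ j ∈ S, x j ≤ g S)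
    (S T : Finset C) (hS : ∑ j ∈ S, x j = g S) (hT : ∑ j ∈ T, x j = g T) :
    ∑ j ∈ S ∪ T, x j = g (S ∪ T) := by
  have h1 := hfeas (S ∪ T)
  have h2 := hfeas (S ∩ T)
  have h3 := hsub S T
  have h4 : ∑ j ∈ S ∪ T, x j + ∑ j ∈ S ∩ T, x j = ∑ j ∈ S, x j + ∑ j ∈ T, x j :=
    Finset.sum_union_inter
  omega

/-- A biUnion of tight sets is tight. -/
lemma tight_biUnion {C : Type*} [Fintype C] [DecidableEq C]
    (g : Finset C → ℤ)
    (hsub : ∀ X Y : Finset C, g (X ∪ Y) + g (X ∩ Y) ≤ g X + g Y)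
    (hzero : g ∅ = 0)
    (x : C → ℤ) (hfeas : ∀ S : Finset C, ∑ j ∈ S, x j ≤ g S)
    (V : Finset C) (f : C → Finset C)
    (hf : ∀ v ∈ V, ∑ j ∈ f v, x j = g (f v)) :
    ∑ j ∈ V.biUnion f, x j = g (V.biUnion f) := by
  induction V using Finset.induction_on with
  | empty => simpa using hzero.symm
  | @insert a s hnotmem ih =>
    rw [Finset.biUnion_insert]
    exact tight_union g hsub x hfeas _ _ (hf a (Finset.mem_insert_self a s))
      (ih fun v hv => hf v (Finset.mem_insert_of_mem hv))

/-- The integer points of the base polyhedron of an integer-valued submodular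
function satisfy the M-convex exchange axiom. -/
theorem base_polyhedron_int_M_convex {C : Type*} [Fintype C] [DecidableEq C]
    (g : Finset C → ℤ)
    (hsub : ∀ X Y : Finset C, g (X ∪ Y) + g (X ∩ Y) ≤ g X + g Y)
    (hzero : g ∅ = 0)
    (hne : ∃ x : C → ℤ, memBaseInt g x)
    (x y : C → ℤ) (hx : memBaseInt g x) (hy : memBaseInt g y)
    (u : C) (hu : y u < x u) :
    ∃ v : C, x v < y v ∧ memBaseInt g (x - Pi.single u 1 + Pi.single v 1) := by
  classical
  by_contra hcon
  push_neg at hcon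
  -- For each v with x v < y v, there is a tight set containing v but not u.
  have key : ∀ v : C, ∃ S : Finset C,
      x v < y v → (v ∈ S ∧ u ∉ S ∧ ∑ j ∈ S, x j = g S) := by
    intro v
    by_cases hv : x v < y v
    · have hnot := hcon v hv
      -- the total-sum condition holds for the exchanged vector
      have hsumtot : ∑ j, (x - Pi.single u 1 + Pi.single v 1 : C → ℤ) j = g Finset.univ := by
        simp only [Pi.add_apply, Pi.sub_apply]
        rw [Finset.sum_add_distrib, Finset.sum_sub_distrib,
          Finset.sum_pi_single', Finset.sum_pi_single']
        simp [hx.2]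
      -- so feasibility must fail at some set S
      have : ∃ S : Finset C, g S < ∑ j ∈ S, ((x - Pi.single u 1 + Pi.single v 1 : C → ℤ)) j := by
        by_contra hall
        push_neg at hall
        exact hnot ⟨hall, hsumtot⟩
      obtain ⟨S, hS⟩ := this
      have hsumS : ∑ j ∈ S, (x - Pi.single u 1 + Pi.single v 1 : C → ℤ) j =
          ∑ j ∈ S, x j - (if u ∈ S then 1 else 0) + (if v ∈ S then 1 else 0) := by
        simp only [Pi.add_apply, Pi.sub_apply]
        rw [Finset.sum_add_distrib, Finset.sum_sub_distrib,
          Finset.sum_pi_single', Finset.sum_pi_single']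
      rw [hsumS] at hS
      have hfeasS := hx.1 S
      refine ⟨S, fun _ => ⟨?_, ?_, ?_⟩⟩
      · by_contra hvS; simp [hvS] at hS; omega
      · intro huS
        by_cases hvS : v ∈ S <;> simp [huS, hvS] at hS <;> omega
      · by_cases hvS : v ∈ S <;> by_cases huS : u ∈ S <;>
          simp [huS, hvS] at hS <;> omega
    · exact ⟨∅, fun h => absurd h hv⟩
  choose Sv hSv using key
  set V : Finset C := Finset.univ.filter (fun v => x v < y v) with hV
  set A : Finset C := V.biUnion Sv with hA
  have hAtight : ∑ j ∈ A, x j = g A := by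
    apply tight_biUnion g hsub hzero x hx.1
    intro v hv
    exact (hSv v (Finset.mem_filter.mp hv).2).2.2
  have huA : u ∉ A := by
    intro hmem
    obtain ⟨v, hv, hvS⟩ := Finset.mem_biUnion.mp hmem
    exact (hSv v (Finset.mem_filter.mp hv).2).2.1 hvS
  have hsubA : ∀ v : C, x v < y v → v ∈ A := by
    intro v hv
    exact Finset.mem_biUnion.mpr ⟨v, Finset.mem_filter.mpr ⟨Finset.mem_univ v, hv⟩,
      (hSv v hv).1⟩
  -- y(A) ≤ g(A) = x(A)
  have hyA : ∑ j ∈ A, y j ≤ ∑ j ∈ A, x j := hAtight ▸ hy.1 A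
  -- strict inequality on the complement
  have hcompl : ∑ j ∈ Aᶜ, y j < ∑ j ∈ Aᶜ, x j := by
    apply Finset.sum_lt_sum
    · intro j hj
      by_contra h
      push_neg at h
      exact (Finset.mem_compl.mp hj) (hsubA j h)
    · exact ⟨u, Finset.mem_compl.mpr huA, hu⟩
  have hxtot : ∑ j ∈ A, x j + ∑ j ∈ Aᶜ, x j = g Finset.univ := by
    rw [Finset.sum_add_sum_compl]; exact hx.2
  have hytot : ∑ j ∈ A, y j + ∑ j ∈ Aᶜ, y j = g Finset.univ := by
    rw [Finset.sum_add_sum_compl]; exact hy.2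
  omega
end

section
/- If B ⊆ ℤ^C is a nonempty M-convex set, then the set function f(S) = sup{ x(S) : x ∈ B } (for S ⊆ C) is submodular whenever it is finite-valued. -/
section Aux
variable {C : Type*} [Fintype C] [DecidableEq C]

omit [Fintype C] in
lemma sum_single_exchange (x : C → ℤ) (u v : C) (S : Finset C) :
    ∑ j ∈ S, ((x - Pi.single u 1 + Pi.single v 1 : C → ℤ)) j
      = ∑ j ∈ S, x j - (if u ∈ S then 1 else 0) + (if v ∈ S then 1 else 0) := by
  simp only [Pi.add_apply, Pi.sub_apply, Finset.sum_add_distrib, Finset.sum_sub_distrib,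
    Pi.single_apply]
  rw [Finset.sum_ite_eq' S u (fun _ => (1:ℤ)), Finset.sum_ite_eq' S v (fun _ => (1:ℤ))]

lemma dist_exchange (x y : C → ℤ) (u v : C) (h1 : y u < x u) (h2 : x v < y v) :
    ∑ c, (((x - Pi.single u 1 + Pi.single v 1 : C → ℤ)) c - y c).natAbs + 2
      = ∑ c, (x c - y c).natAbs := by
  have huv : u ≠ v := by rintro rfl; omega
  have hu : u ∈ Finset.univ.erase v := by simp [huv]
  have hv : v ∈ (Finset.univ : Finset C) := Finset.mem_univ v
  have key : ∀ z : C → ℤ, ∑ c, (z c - y c).natAbs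
      = (z u - y u).natAbs + (z v - y v).natAbs
        + ∑ c ∈ (Finset.univ.erase v).erase u, (z c - y c).natAbs := by
    intro z
    rw [← Finset.add_sum_erase _ _ hv, ← Finset.add_sum_erase _ _ hu]
    ring
  rw [key, key]
  have hrest : ∑ c ∈ (Finset.univ.erase v).erase u,
      (((x - Pi.single u 1 + Pi.single v 1 : C → ℤ)) c - y c).natAbs
      = ∑ c ∈ (Finset.univ.erase v).erase u, (x c - y c).natAbs := by
    refine Finset.sum_congr rfl fun c hc => ?_
    simp only [Finset.mem_erase] at hc
    simp [Pi.single_apply, hc.1, hc.2.1]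
  rw [hrest]
  have e1 : ((x - Pi.single u 1 + Pi.single v 1 : C → ℤ)) u = x u - 1 := by
    simp [Pi.single_apply, huv.symm]
  have e2 : ((x - Pi.single u 1 + Pi.single v 1 : C → ℤ)) v = x v + 1 := by
    simp [Pi.single_apply, huv]
  rw [e1, e2]
  omega

end Aux

/-- The set function `S ↦ max{ x(S) : x ∈ B }` associated with a nonempty
finite M-convex set `B` is submodular. -/
theorem M_convex_sup_submodular {C : Type*} [Fintype C] [DecidableEq C]
    (B : Finset (C → ℤ)) (hne : B.Nonempty)
    (hex : ∀ x ∈ B, ∀ y ∈ B, ∀ u : C, y u < x u →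
      ∃ v : C, x v < y v ∧ x - Pi.single u 1 + Pi.single v 1 ∈ B)
    (X Y : Finset C) :
    B.sup' hne (fun x => ∑ j ∈ X ∪ Y, x j)
      + B.sup' hne (fun x => ∑ j ∈ X ∩ Y, x j)
    ≤ B.sup' hne (fun x => ∑ j ∈ X, x j)
      + B.sup' hne (fun x => ∑ j ∈ Y, x j) := by
  classical
  suffices H : ∀ n : ℕ, ∀ x y : C → ℤ, x ∈ B → y ∈ B →
      (∑ c, (x c - y c).natAbs) = n →
      (∑ j ∈ X ∪ Y, x j) + (∑ j ∈ X ∩ Y, y j)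
        ≤ B.sup' hne (fun x => ∑ j ∈ X, x j) + B.sup' hne (fun x => ∑ j ∈ Y, x j) by
    obtain ⟨x, hx, hx2⟩ := Finset.exists_mem_eq_sup' hne (fun x => ∑ j ∈ X ∪ Y, x j)
    obtain ⟨y, hy, hy2⟩ := Finset.exists_mem_eq_sup' hne (fun x => ∑ j ∈ X ∩ Y, x j)
    rw [hx2, hy2]
    exact H _ x y hx hy rfl
  intro n
  induction n using Nat.strong_induction_on with
  | _ n ih =>
  intro x y hx hy hd
  by_cases hcase : ∃ u ∈ Y \ X, y u < x u
  · obtain ⟨u, huYX, hyu⟩ := hcase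
    obtain ⟨v, hxv, hmem⟩ := hex x hx y hy u hyu
    by_cases hv : v ∈ X ∪ Y
    · -- replace x by x' ; value on X ∪ Y unchanged
      have hdd := dist_exchange x y u v hyu hxv
      have hlt : ∑ c, (((x - Pi.single u 1 + Pi.single v 1 : C → ℤ)) c - y c).natAbs < n := by omega
      have := ih _ hlt ((x - Pi.single u 1 + Pi.single v 1 : C → ℤ)) y hmem hy rfl
      rw [sum_single_exchange] at this
      have huU : u ∈ X ∪ Y := Finset.mem_union_right _ (Finset.mem_sdiff.mp huYX).1
      simp only [huU, hv, if_pos] at this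
      linarith
    · -- exchange on y's side at v
      obtain ⟨w, hyw, hmem'⟩ := hex y hy x hx v hxv
      have hdd := dist_exchange y x v w hxv hyw
      have hsymm : ∀ z z' : C → ℤ, ∑ c, (z c - z' c).natAbs = ∑ c, (z' c - z c).natAbs := by
        intro z z'
        refine Finset.sum_congr rfl fun c _ => ?_
        rw [← neg_sub, Int.natAbs_neg]
      have hlt : ∑ c, (x c - ((y - Pi.single v 1 + Pi.single w 1 : C → ℤ)) c).natAbs < n := by
        rw [hsymm]
        rw [hsymm x y] at hd
        omega
      have := ih _ hlt x ((y - Pi.single v 1 + Pi.single w 1 : C → ℤ)) hx hmem' rfl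
      rw [sum_single_exchange] at this
      have hvI : v ∉ X ∩ Y := fun h => hv (Finset.mem_union_left _ (Finset.mem_inter.mp h).1)
      simp only [hvI, if_neg, if_false] at this
      have : (∑ j ∈ X ∪ Y, x j) + ((∑ j ∈ X ∩ Y, y j) + (if w ∈ X ∩ Y then (1:ℤ) else 0))
          ≤ B.sup' hne (fun x => ∑ j ∈ X, x j) + B.sup' hne (fun x => ∑ j ∈ Y, x j) := by
        convert this using 2; ring
      have hw0 : (0:ℤ) ≤ if w ∈ X ∩ Y then (1:ℤ) else 0 := by positivity
      linarith
  · push_neg at hcase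
    -- no exchange needed: x ≤ y on Y \ X
    have hsplit1 : ∑ j ∈ X ∪ Y, x j = ∑ j ∈ X, x j + ∑ j ∈ Y \ X, x j := by
      rw [← Finset.sum_union (Finset.disjoint_sdiff)]
      congr 1
      rw [Finset.union_sdiff_self_eq_union]
    have hsplit2 : ∑ j ∈ Y, y j = ∑ j ∈ X ∩ Y, y j + ∑ j ∈ Y \ X, y j := by
      rw [← Finset.sum_union]
      · congr 1
        ext j
        simp only [Finset.mem_union, Finset.mem_inter, Finset.mem_sdiff]
        tauto
      · simp only [Finset.disjoint_left, Finset.mem_inter, Finset.mem_sdiff]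
        tauto
    have hle : ∑ j ∈ Y \ X, x j ≤ ∑ j ∈ Y \ X, y j :=
      Finset.sum_le_sum fun j hj => hcase j hj
    have h1 : ∑ j ∈ X, x j ≤ B.sup' hne (fun x => ∑ j ∈ X, x j) := Finset.le_sup' _ hx
    have h2 : ∑ j ∈ Y, y j ≤ B.sup' hne (fun x => ∑ j ∈ Y, x j) := Finset.le_sup' _ hy
    linarith
end

section
/- Every M-convex set B ⊆ ℤ^K is 'hole-free': B equals the set of integer points of its convex hull, i.e., B = conv(B) ∩ ℤ^K. -/
namespace MHoleFree


variable {N : ℕ}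

abbrev V (N : ℕ) := Fin N → ℤ
abbrev Wr (N : ℕ) := Fin N → ℝ

/-- Real image of an integer vector. -/
def R : V N → Wr N := fun z j => (z j : ℝ)

/-- One-sided exchange axiom. -/
def EXC (B : Set (V N)) : Prop :=
  ∀ x ∈ B, ∀ y ∈ B, ∀ u : Fin N, y u < x u →
    ∃ v : Fin N, x v < y v ∧ x - Pi.single u 1 + Pi.single v 1 ∈ B

/-- Single exchange step. -/
def ex (z : V N) (u v : Fin N) : V N := z - Pi.single u 1 + Pi.single v 1

lemma ex_apply (z : V N) (u v j : Fin N) :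
    ex z u v j = z j - (if j = u then 1 else 0) + (if j = v then 1 else 0) := by
  simp [ex, Pi.single_apply]

lemma ex_apply_fst (z : V N) {u v : Fin N} (h : u ≠ v) : ex z u v u = z u - 1 := by
  rw [ex_apply, if_pos rfl, if_neg h]; ring

lemma ex_apply_snd (z : V N) {u v : Fin N} (h : v ≠ u) : ex z u v v = z v + 1 := by
  rw [ex_apply, if_neg h, if_pos rfl]; ring

lemma ex_apply_other (z : V N) {u v j : Fin N} (h1 : j ≠ u) (h2 : j ≠ v) :
    ex z u v j = z j := by
  rw [ex_apply, if_neg h1, if_neg h2]; ring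

/-- ℓ¹-distance. -/
def dl (x y : V N) : ℕ := ∑ j, (x j - y j).natAbs

lemma dl_symm (x y : V N) : dl x y = dl y x := by
  unfold dl; apply Finset.sum_congr rfl; intro j _; omega

lemma dl_ex {x y : V N} {v s : Fin N} (h1 : x v < y v) (h2 : y s < x s) :
    dl x (ex y v s) + 2 = dl x y := by
  classical
  have hvs : v ≠ s := by intro h; rw [h] at h1; omega
  have hsv : s ∈ Finset.univ.erase v :=
    Finset.mem_erase.2 ⟨fun h => hvs h.symm, Finset.mem_univ s⟩
  have split : ∀ g : Fin N → ℕ,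
      ∑ j, g j = g v + (g s + ∑ j ∈ (Finset.univ.erase v).erase s, g j) := by
    intro g
    rw [← Finset.add_sum_erase _ g (Finset.mem_univ v), ← Finset.add_sum_erase _ g hsv]
  have hgv : (x v - ex y v s v).natAbs + 1 = (x v - y v).natAbs := by
    rw [ex_apply_fst y hvs]; omega
  have hgs : (x s - ex y v s s).natAbs + 1 = (x s - y s).natAbs := by
    rw [ex_apply_snd y (fun h => hvs h.symm)]; omega
  have hrest : ∑ j ∈ (Finset.univ.erase v).erase s, (x j - ex y v s j).natAbs
      = ∑ j ∈ (Finset.univ.erase v).erase s, (x j - y j).natAbs := by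
    apply Finset.sum_congr rfl
    intro j hj
    have h2' : j ≠ s := (Finset.mem_erase.1 hj).1
    have h1' : j ≠ v := (Finset.mem_erase.1 (Finset.mem_erase.1 hj).2).1
    rw [ex_apply_other y h1' h2']
  unfold dl
  rw [split (fun j => (x j - ex y v s j).natAbs), split (fun j => (x j - y j).natAbs), hrest]
  omega

/-- Simultaneous (two-sided) exchange, derived from the one-sided axiom. -/
lemma sym_exch {B : Set (V N)} (hex : EXC B) :
    ∀ n : ℕ, ∀ x ∈ B, ∀ y ∈ B, ∀ u : Fin N, y u < x u → dl x y < n →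
      ∃ v : Fin N, x v < y v ∧ ex x u v ∈ B ∧ ex y v u ∈ B := by
  intro n
  induction n with
  | zero => intro x _ y _ u _ hd; omega
  | succ n IH =>
    intro x hx y hy u hu hd
    obtain ⟨v₁, hv₁, hx'⟩ := hex x hx y hy u hu
    obtain ⟨s₁, hs₁, hy₁⟩ := hex y hy x hx v₁ hv₁
    by_cases hsu : s₁ = u
    · subst hsu
      exact ⟨v₁, hv₁, hx', hy₁⟩
    · have huv₁ : u ≠ v₁ := by intro h; rw [h] at hu; omega
      have hus₁ : u ≠ s₁ := fun h => hsu h.symm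
      have hv₁s₁ : v₁ ≠ s₁ := by intro h; rw [h] at hv₁; omega
      have hy₁B : ex y v₁ s₁ ∈ B := hy₁
      have hy₁u : ex y v₁ s₁ u = y u := ex_apply_other y huv₁ hus₁
      have hdist : dl x (ex y v₁ s₁) + 2 = dl x y := dl_ex hv₁ hs₁
      obtain ⟨v₂, hv₂, hA, hP⟩ := IH x hx (ex y v₁ s₁) hy₁B u
        (by rw [hy₁u]; exact hu) (by omega)
      -- hv₂ : x v₂ < ex y v₁ s₁ v₂ ; hA : ex x u v₂ ∈ B ; hP : ex (ex y v₁ s₁) v₂ u ∈ B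
      have hv₂s₁ : v₂ ≠ s₁ := by
        intro h
        rw [h, ex_apply_snd y (fun hh => hv₁s₁ hh.symm)] at hv₂
        omega
      have hxy₂ : x v₂ < y v₂ := by
        by_cases h : v₂ = v₁
        · rw [h, ex_apply_fst y hv₁s₁] at hv₂
          rw [h]; omega
        · rw [ex_apply_other y h hv₂s₁] at hv₂; exact hv₂
      have hv₂u : v₂ ≠ u := by intro h; rw [h] at hxy₂; omega
      have e1 : s₁ ≠ v₁ := fun h => hv₁s₁ h.symm
      have e2 : s₁ ≠ v₂ := fun h => hv₂s₁ h.symm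
      have e3 : s₁ ≠ u := fun h => hus₁ h.symm
      have hPs₁ : y s₁ < ex (ex y v₁ s₁) v₂ u s₁ := by
        rw [ex_apply_other _ e2 e3, ex_apply_snd y e1]
        omega
      obtain ⟨t, ht, hQ⟩ := hex _ hP y hy s₁ hPs₁
      have htv : t = v₁ ∨ t = v₂ := by
        by_contra hcon
        push_neg at hcon
        obtain ⟨h1, h2⟩ := hcon
        by_cases ha : t = s₁
        · rw [ha, ex_apply_other _ e2 e3, ex_apply_snd y e1] at ht
          omega
        · by_cases hb : t = u
          · rw [hb, ex_apply_snd _ (fun h => hv₂u h.symm), ex_apply_other y huv₁ hus₁] at ht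
            omega
          · rw [ex_apply_other _ h2 hb, ex_apply_other y h1 ha] at ht
            omega
      rcases htv with h | h
      · rw [h] at hQ
        refine ⟨v₂, hxy₂, hA, ?_⟩
        have heq : ex (ex y v₁ s₁) v₂ u - Pi.single s₁ 1 + Pi.single v₁ 1 = ex y v₂ u := by
          simp only [ex]; abel
        rwa [heq] at hQ
      · rw [h] at hQ
        refine ⟨v₁, hv₁, hx', ?_⟩
        have heq : ex (ex y v₁ s₁) v₂ u - Pi.single s₁ 1 + Pi.single v₂ 1 = ex y v₁ u := by
          simp only [ex]; abel
        rwa [heq] at hQ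


noncomputable def pt (zm zp : V N) (j₀ : Fin N) (k : ℤ) : Wr N :=
  fun j => (((zp j₀ : ℝ) - (k : ℝ)) * (zm j : ℝ) + ((k : ℝ) - (zm j₀ : ℝ)) * (zp j : ℝ))
    / ((zp j₀ : ℝ) - (zm j₀ : ℝ))


lemma cast_ex_apply (z : V N) (u v j : Fin N) :
    ((ex z u v j : ℤ) : ℝ)
      = (z j : ℝ) - (if j = u then (1:ℝ) else 0) + (if j = v then (1:ℝ) else 0) := by
  rw [ex_apply]
  push_cast
  split_ifs <;> norm_num


/-- Key slicing lemma: the height-`k` point of a segment between two points of `B`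
straddling level `k` in coordinate `j₀` lies in the convex hull of the slice. -/
lemma lemF {B : Set (V N)} (hex : EXC B) (j₀ : Fin N) (k : ℤ) :
    ∀ n : ℕ, ∀ zp ∈ B, ∀ zm ∈ B, dl zm zp < n → zm j₀ ≤ k → k ≤ zp j₀ → zm j₀ < zp j₀ →
      pt zm zp j₀ k ∈ convexHull ℝ (R '' {z | z ∈ B ∧ z j₀ = k}) := by
  intro n
  induction n with
  | zero => intro zp _ zm _ hd; omega
  | succ n IH =>
    intro zp hzp zm hzm hd hbk hka hab
    by_cases hak : zp j₀ = k
    · have hpt : pt zm zp j₀ k = R zp := by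
        funext j
        have hbk' : (zm j₀ : ℝ) < (k : ℝ) := by exact_mod_cast lt_of_lt_of_le hab (le_of_eq hak)
        simp only [pt, R, hak]
        have hne : (k : ℝ) - (zm j₀ : ℝ) ≠ 0 := by linarith
        field_simp
        ring
      rw [hpt]
      exact subset_convexHull ℝ _ ⟨zp, ⟨hzp, hak⟩, rfl⟩
    · by_cases hbk' : zm j₀ = k
      · have hpt : pt zm zp j₀ k = R zm := by
          funext j
          have hka' : (k : ℝ) < (zp j₀ : ℝ) := by
            exact_mod_cast lt_of_le_of_lt (le_of_eq hbk'.symm) hab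
          simp only [pt, R, hbk']
          have hne : (zp j₀ : ℝ) - (k : ℝ) ≠ 0 := by linarith
          field_simp
          ring
        rw [hpt]
        exact subset_convexHull ℝ _ ⟨zm, ⟨hzm, hbk'⟩, rfl⟩
      · -- strict case
        have hka2 : k < zp j₀ := lt_of_le_of_ne hka (fun h => hak h.symm)
        have hbk2 : zm j₀ < k := lt_of_le_of_ne hbk hbk'
        obtain ⟨v, hv, hW, hW'⟩ := sym_exch hex (dl zp zm + 1) zp hzp zm hzm j₀ hab
          (Nat.lt_succ_self _)
        -- hv : zp v < zm v ; hW : ex zp j₀ v ∈ B ; hW' : ex zm v j₀ ∈ B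
        have hvj : v ≠ j₀ := by intro h; rw [h] at hv; omega
        have hWj₀ : ex zp j₀ v j₀ = zp j₀ - 1 := ex_apply_fst zp (fun h => hvj h.symm)
        have hW'j₀ : ex zm v j₀ j₀ = zm j₀ + 1 := ex_apply_snd zm (Ne.symm hvj)
        -- distances
        have hd1 : dl zm (ex zp j₀ v) + 2 = dl zm zp := dl_ex hab hv
        have hd2 : dl (ex zm v j₀) zp + 2 = dl zm zp := by
          rw [dl_symm (ex zm v j₀) zp, dl_symm zm zp]
          exact dl_ex hv hab
        have h1 : pt zm (ex zp j₀ v) j₀ k ∈ convexHull ℝ (R '' {z | z ∈ B ∧ z j₀ = k}) := by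
          apply IH (ex zp j₀ v) hW zm hzm (by omega) hbk (by omega) (by omega)
        have h2 : pt (ex zm v j₀) zp j₀ k ∈ convexHull ℝ (R '' {z | z ∈ B ∧ z j₀ = k}) := by
          apply IH zp hzp (ex zm v j₀) hW' (by omega) (by omega) hka (by omega)
        set μ : ℝ := ((zp j₀ : ℝ) - (k : ℝ)) / ((zp j₀ : ℝ) - (zm j₀ : ℝ)) with hμ
        have hc1 : (zm j₀ : ℝ) + 1 ≤ (k : ℝ) := by exact_mod_cast (by omega : zm j₀ + 1 ≤ k)
        have hc2 : (k : ℝ) + 1 ≤ (zp j₀ : ℝ) := by exact_mod_cast (by omega : k + 1 ≤ zp j₀)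
        have hD : (0:ℝ) < (zp j₀ : ℝ) - (zm j₀ : ℝ) := by linarith
        have hD2 : ((zp j₀ : ℝ) - 1) - (zm j₀ : ℝ) ≠ 0 := by linarith
        have hD3 : (zp j₀ : ℝ) - ((zm j₀ : ℝ) + 1) ≠ 0 := by linarith
        have hμ0 : 0 ≤ μ := div_nonneg (by linarith) (le_of_lt hD)
        have hμ1 : 0 ≤ 1 - μ := by
          rw [hμ]
          rw [sub_nonneg, div_le_one hD]
          linarith
        have hcvx := (convex_convexHull ℝ (R '' {z | z ∈ B ∧ z j₀ = k})) h1 h2 hμ0 hμ1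
          (by ring)
        have cW0 : ((ex zp j₀ v j₀ : ℤ) : ℝ) = (zp j₀ : ℝ) - 1 := by
          rw [hWj₀]; push_cast; ring
        have cW'0 : ((ex zm v j₀ j₀ : ℤ) : ℝ) = (zm j₀ : ℝ) + 1 := by
          rw [hW'j₀]; push_cast; ring
        have heq : pt zm zp j₀ k
            = μ • pt zm (ex zp j₀ v) j₀ k + (1 - μ) • pt (ex zm v j₀) zp j₀ k := by
          funext j
          simp only [pt, Pi.add_apply, Pi.smul_apply, smul_eq_mul]
          rw [cW0, cW'0, cast_ex_apply zp j₀ v j, cast_ex_apply zm v j₀ j]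
          rw [hμ]
          field_simp
          ring
        rw [heq]
        exact hcvx


/-- All points of the hull of the slice have height `k`. -/
lemma Theight {B : Set (V N)} (j₀ : Fin N) (k : ℤ) :
    ∀ q ∈ convexHull ℝ (R '' {z | z ∈ B ∧ z j₀ = k}), q j₀ = (k : ℝ) := by
  intro q hq
  have hsub : convexHull ℝ (R '' {z | z ∈ B ∧ z j₀ = k}) ⊆ {f : Wr N | f j₀ = (k : ℝ)} := by
    apply convexHull_min
    · rintro f ⟨z, hz, rfl⟩
      show ((z j₀ : ℤ) : ℝ) = (k : ℝ)
      exact_mod_cast hz.2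
    · intro f hf g hg a b ha hb hab
      simp only [Set.mem_setOf_eq] at hf hg ⊢
      simp only [Pi.add_apply, Pi.smul_apply, smul_eq_mul, hf, hg]
      rw [← add_mul, hab, one_mul]
  exact hsub hq

/-- Base case: a convex combination of points that are all at height `k`. -/
lemma transport_base {B : Set (V N)} (j₀ : Fin N) (k : ℤ)
    (ι : Type) [Fintype ι] (p : ι → Wr N) (w : ι → ℝ)
    (hw0 : ∀ i, 0 ≤ w i) (hw1 : ∑ i, w i = 1)
    (hp : ∀ i, p i ∈ (R '' B) ∪ convexHull ℝ (R '' {z | z ∈ B ∧ z j₀ = k}))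
    (x : Wr N) (hx : ∑ i, w i • p i = x)
    (hfe : Finset.univ.filter (fun i => w i ≠ 0 ∧ p i j₀ ≠ (k : ℝ)) = ∅) :
    x ∈ convexHull ℝ (R '' {z | z ∈ B ∧ z j₀ = k}) := by
  classical
  set T := convexHull ℝ (R '' {z | z ∈ B ∧ z j₀ = k}) with hT
  set t1 := Finset.univ.filter (fun i => w i ≠ 0) with ht1
  have hvanish : ∀ i ∈ Finset.univ, i ∉ t1 → w i • p i = 0 := by
    intro i _ hni
    have : w i = 0 := by
      by_contra hne
      exact hni (Finset.mem_filter.2 ⟨Finset.mem_univ i, hne⟩)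
    simp [this]
  have hx1 : ∑ i ∈ t1, w i • p i = x := by
    rw [← hx]
    exact Finset.sum_subset (Finset.filter_subset _ _) hvanish
  have hw1' : ∑ i ∈ t1, w i = 1 := by
    rw [← hw1]
    apply Finset.sum_subset (Finset.filter_subset _ _)
    intro i _ hni
    by_contra hne
    exact hni (Finset.mem_filter.2 ⟨Finset.mem_univ i, hne⟩)
  rw [← hx1]
  apply (convex_convexHull ℝ (R '' {z | z ∈ B ∧ z j₀ = k})).sum_mem
    (fun i _ => hw0 i) hw1'
  intro i hi
  have hiw : w i ≠ 0 := (Finset.mem_filter.1 hi).2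
  have hik : p i j₀ = (k : ℝ) := by
    by_contra hne
    have : i ∈ Finset.univ.filter (fun i => w i ≠ 0 ∧ p i j₀ ≠ (k : ℝ)) :=
      Finset.mem_filter.2 ⟨Finset.mem_univ i, hiw, hne⟩
    rw [hfe] at this
    exact absurd this (Finset.notMem_empty i)
  rcases hp i with ⟨z, hz, hze⟩ | hmem
  · refine subset_convexHull ℝ _ ⟨z, ⟨hz, ?_⟩, hze⟩
    rw [← hze] at hik
    have : ((z j₀ : ℤ) : ℝ) = (k : ℝ) := hik
    exact_mod_cast this
  · exact hmem


/-- Surgery step: replace (part of) two straddling atoms by one hull point. -/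
lemma surgery {S T : Set (Wr N)} {j₀ : Fin N} {k : ℤ}
    {ι : Type} [Fintype ι] (p : ι → Wr N) (w : ι → ℝ)
    (hw0 : ∀ i, 0 ≤ w i) (hw1 : ∑ i, w i = 1)
    (hp : ∀ i, p i ∈ S ∪ T)
    (x : Wr N) (hx : ∑ i, w i • p i = x)
    (i1 i2 : ι) (hne : i1 ≠ i2)
    (hw1p : 0 < w i1) (hw2p : 0 < w i2)
    (hpk1 : p i1 j₀ ≠ (k : ℝ))
    (q : Wr N) (hq : q ∈ T) (hqk : q j₀ = (k : ℝ))
    (γ δ : ℝ) (hγ : 0 < γ) (hδ : 0 < δ) (hγδ : γ + δ = 1)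
    (hqid : q = γ • p i1 + δ • p i2)
    (hcm : w i1 / γ ≤ w i2 / δ) :
    ∃ (ι' : Type) (_ : Fintype ι') (p' : ι' → Wr N) (w' : ι' → ℝ),
      (∀ i, 0 ≤ w' i) ∧ (∑ i, w' i = 1) ∧ (∀ i, p' i ∈ S ∪ T) ∧
      (∑ i, w' i • p' i = x) ∧
      (Finset.univ.filter (fun i => w' i ≠ 0 ∧ p' i j₀ ≠ (k : ℝ))).card
        < (Finset.univ.filter (fun i => w i ≠ 0 ∧ p i j₀ ≠ (k : ℝ))).card := by
  classical
  set c : ℝ := w i1 / γ with hc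
  have hc0 : 0 < c := div_pos hw1p hγ
  set χ : ι → ℝ := fun i => if i = i1 then γ else if i = i2 then δ else 0 with hχ
  have hχsplit : ∀ i, χ i = (if i = i1 then γ else 0) + (if i = i2 then δ else 0) := by
    intro i
    by_cases h1 : i = i1
    · subst h1
      simp [hχ, hne]
    · by_cases h2 : i = i2 <;> simp [hχ, h1, h2, Ne.symm hne]
  have hχ1 : χ i1 = γ := by simp [hχ]
  have hχ2 : χ i2 = δ := by simp [hχ, hne.symm, hne]
  have hχ0 : ∀ i, i ≠ i1 → i ≠ i2 → χ i = 0 := by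
    intro i h1 h2; simp [hχ, h1, h2]
  have hcγ : c * γ = w i1 := div_mul_cancel₀ _ (ne_of_gt hγ)
  have hcδ : c * δ ≤ w i2 := by
    rw [hc]
    calc w i1 / γ * δ ≤ w i2 / δ * δ :=
          mul_le_mul_of_nonneg_right hcm (le_of_lt hδ)
      _ = w i2 := div_mul_cancel₀ _ (ne_of_gt hδ)
  refine ⟨Option ι, inferInstance, fun o => o.elim q p,
    fun o => o.elim c (fun i => w i - c * χ i), ?_, ?_, ?_, ?_, ?_⟩
  · -- nonneg
    intro o
    rcases o with _ | i
    · exact le_of_lt hc0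
    · show 0 ≤ w i - c * χ i
      by_cases h1 : i = i1
      · subst h1; rw [hχ1, hcγ]; linarith
      · by_cases h2 : i = i2
        · subst h2; rw [hχ2]; linarith
        · rw [hχ0 i h1 h2]; simpa using hw0 i
  · -- total weight
    have hχsum : ∑ i, χ i = γ + δ := by
      calc ∑ i, χ i = ∑ i, ((if i = i1 then γ else 0) + (if i = i2 then δ else 0)) :=
            Finset.sum_congr rfl (fun i _ => hχsplit i)
        _ = γ + δ := by
            rw [Finset.sum_add_distrib, Fintype.sum_ite_eq' i1 (fun _ => γ),
              Fintype.sum_ite_eq' i2 (fun _ => δ)]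
    rw [univ_option, Finset.sum_insertNone]
    show c + ∑ i, (w i - c * χ i) = 1
    rw [Finset.sum_sub_distrib, hw1, ← Finset.mul_sum, hχsum, hγδ]
    ring
  · -- memberships
    intro o
    rcases o with _ | i
    · exact Or.inr hq
    · exact hp i
  · -- center of mass
    rw [univ_option, Finset.sum_insertNone]
    show c • q + ∑ i, (w i - c * χ i) • p i = x
    have hterm : ∀ i, (w i - c * χ i) • p i
        = w i • p i - ((if i = i1 then (c * γ) • p i else 0)
          + (if i = i2 then (c * δ) • p i else 0)) := by
      intro i
      rw [hχsplit i]
      by_cases h1 : i = i1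
      · subst h1
        rw [if_pos rfl, if_neg hne, if_pos rfl, if_neg hne]
        rw [sub_smul]
        simp
      · by_cases h2 : i = i2
        · subst h2
          rw [if_neg h1, if_pos rfl, if_neg h1, if_pos rfl]
          rw [sub_smul]
          simp
        · rw [if_neg h1, if_neg h2, if_neg h1, if_neg h2]
          simp
    calc c • q + ∑ i, (w i - c * χ i) • p i
        = c • q + (∑ i, w i • p i
            - (∑ i, (if i = i1 then (c * γ) • p i else 0)
              + ∑ i, (if i = i2 then (c * δ) • p i else 0))) := by
          rw [← Finset.sum_add_distrib, ← Finset.sum_sub_distrib]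
          exact congrArg _ (Finset.sum_congr rfl (fun i _ => hterm i))
      _ = c • q + (x - ((c * γ) • p i1 + (c * δ) • p i2)) := by
          rw [hx, Fintype.sum_ite_eq' i1 (fun i => (c * γ) • p i),
            Fintype.sum_ite_eq' i2 (fun i => (c * δ) • p i)]
      _ = x := by
          rw [hqid]
          rw [smul_add, smul_smul, smul_smul]
          abel
  · -- cardinality decreases
    set P : Option ι → Prop := fun o =>
      (Option.elim o c (fun i => w i - c * χ i)) ≠ 0 ∧ (Option.elim o q p) j₀ ≠ (k : ℝ)
      with hP
    have hPnone : ¬ P none := by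
      intro h
      exact h.2 hqk
    have hsub1 : (Finset.univ : Finset (Option ι)).filter P
        ⊆ (Finset.univ.filter (fun i => P (some i))).map Function.Embedding.some := by
      intro o ho
      rw [Finset.mem_filter] at ho
      rcases o with _ | i
      · exact absurd ho.2 hPnone
      · rw [Finset.mem_map]
        exact ⟨i, Finset.mem_filter.2 ⟨Finset.mem_univ i, ho.2⟩, rfl⟩
    have hsub2 : Finset.univ.filter (fun i => P (some i))
        ⊆ (Finset.univ.filter (fun i => w i ≠ 0 ∧ p i j₀ ≠ (k : ℝ))).erase i1 := by
      intro i hi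
      rw [Finset.mem_filter] at hi
      obtain ⟨-, hwi, hpi⟩ := hi
      have hii1 : i ≠ i1 := by
        intro h
        subst h
        apply hwi
        show w i - c * χ i = 0
        rw [hχ1, hcγ]
        ring
      refine Finset.mem_erase.2 ⟨hii1, Finset.mem_filter.2 ⟨Finset.mem_univ i, ?_, hpi⟩⟩
      by_cases h2 : i = i2
      · subst h2
        exact ne_of_gt hw2p
      · intro hw0i
        apply hwi
        show w i - c * χ i = 0
        rw [hχ0 i hii1 h2, hw0i]
        ring
    have hmem1 : i1 ∈ Finset.univ.filter (fun i => w i ≠ 0 ∧ p i j₀ ≠ (k : ℝ)) :=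
      Finset.mem_filter.2 ⟨Finset.mem_univ i1, ne_of_gt hw1p, hpk1⟩
    calc (Finset.univ.filter P).card
        ≤ ((Finset.univ.filter (fun i => P (some i))).map Function.Embedding.some).card :=
          Finset.card_le_card hsub1
      _ = (Finset.univ.filter (fun i => P (some i))).card := Finset.card_map _
      _ ≤ ((Finset.univ.filter (fun i => w i ≠ 0 ∧ p i j₀ ≠ (k : ℝ))).erase i1).card :=
          Finset.card_le_card hsub2
      _ < (Finset.univ.filter (fun i => w i ≠ 0 ∧ p i j₀ ≠ (k : ℝ))).card := by
          rw [Finset.card_erase_of_mem hmem1]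
          have : 0 < (Finset.univ.filter (fun i => w i ≠ 0 ∧ p i j₀ ≠ (k : ℝ))).card :=
            Finset.card_pos.2 ⟨i1, hmem1⟩
          omega


/-- Transport: a point of the hull of `B` at height `k` lies in the hull of the slice. -/
lemma transport {B : Set (V N)} (hex : EXC B) (j₀ : Fin N) (k : ℤ) :
    ∀ n : ℕ, ∀ (ι : Type) [Fintype ι], ∀ (p : ι → Wr N) (w : ι → ℝ),
      (∀ i, 0 ≤ w i) → (∑ i, w i) = 1 →
      (∀ i, p i ∈ (R '' B) ∪ convexHull ℝ (R '' {z | z ∈ B ∧ z j₀ = k})) →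
      ∀ x : Wr N, (∑ i, w i • p i) = x → x j₀ = (k : ℝ) →
      (Finset.univ.filter (fun i => w i ≠ 0 ∧ p i j₀ ≠ (k : ℝ))).card ≤ n →
      x ∈ convexHull ℝ (R '' {z | z ∈ B ∧ z j₀ = k}) := by
  classical
  intro n
  induction n with
  | zero =>
    intro ι _ p w hw0 hw1 hp x hx hxk hcard
    exact transport_base j₀ k ι p w hw0 hw1 hp x hx
      (Finset.card_eq_zero.1 (Nat.le_zero.1 hcard))
  | succ n IH =>
    intro ι _ p w hw0 hw1 hp x hx hxk hcard
    by_cases hfe : Finset.univ.filter (fun i => w i ≠ 0 ∧ p i j₀ ≠ (k : ℝ)) = ∅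
    · exact transport_base j₀ k ι p w hw0 hw1 hp x hx hfe
    · -- there is a positive-weight atom off the hyperplane
      obtain ⟨i₀, hi₀⟩ := Finset.nonempty_of_ne_empty hfe
      rw [Finset.mem_filter] at hi₀
      obtain ⟨-, hi₀w, hi₀k⟩ := hi₀
      have hw₀pos : 0 < w i₀ := lt_of_le_of_ne (hw0 i₀) (Ne.symm hi₀w)
      have hbal : ∑ i, w i * (p i j₀ - (k : ℝ)) = 0 := by
        have h1 : ∑ i, w i * p i j₀ = x j₀ := by
          rw [← hx, Finset.sum_apply]
          apply Finset.sum_congr rfl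
          intro i _
          simp [Pi.smul_apply, smul_eq_mul]
        have h2 : ∑ i, w i * (p i j₀ - (k : ℝ))
            = (∑ i, w i * p i j₀) - (∑ i, w i) * (k : ℝ) := by
          rw [Finset.sum_mul, ← Finset.sum_sub_distrib]
          apply Finset.sum_congr rfl
          intro i _
          ring
        rw [h2, h1, hw1, hxk]
        ring
      have hmain : ∃ ip im, ip ≠ im ∧ 0 < w ip ∧ 0 < w im ∧
          (k : ℝ) < p ip j₀ ∧ p im j₀ < (k : ℝ) := by
        have hfind : ∀ s : Finset ι, ∑ i ∈ s, w i * (p i j₀ - (k : ℝ)) < 0 →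
            ∃ i ∈ s, 0 < w i ∧ p i j₀ < (k : ℝ) := by
          intro s hs
          have : ∑ i ∈ s, w i * (p i j₀ - (k : ℝ)) < ∑ i ∈ s, (0 : ℝ) := by
            simpa using hs
          obtain ⟨i, his, hi⟩ := Finset.exists_lt_of_sum_lt this
          refine ⟨i, his, ?_, ?_⟩
          · rcases lt_or_eq_of_le (hw0 i) with h | h
            · exact h
            · exfalso; rw [← h] at hi; simp at hi
          · by_contra hge
            push_neg at hge
            have : 0 ≤ w i * (p i j₀ - (k : ℝ)) :=
              mul_nonneg (hw0 i) (by linarith)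
            linarith
        have hfind' : ∀ s : Finset ι, 0 < ∑ i ∈ s, w i * (p i j₀ - (k : ℝ)) →
            ∃ i ∈ s, 0 < w i ∧ (k : ℝ) < p i j₀ := by
          intro s hs
          have : ∑ i ∈ s, (0 : ℝ) < ∑ i ∈ s, w i * (p i j₀ - (k : ℝ)) := by
            simpa using hs
          obtain ⟨i, his, hi⟩ := Finset.exists_lt_of_sum_lt this
          refine ⟨i, his, ?_, ?_⟩
          · rcases lt_or_eq_of_le (hw0 i) with h | h
            · exact h
            · exfalso; rw [← h] at hi; simp at hi
          · by_contra hge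
            push_neg at hge
            have : w i * (p i j₀ - (k : ℝ)) ≤ 0 :=
              mul_nonpos_of_nonneg_of_nonpos (hw0 i) (by linarith)
            linarith
        have herase : ∑ i ∈ Finset.univ.erase i₀, w i * (p i j₀ - (k : ℝ))
            = - (w i₀ * (p i₀ j₀ - (k : ℝ))) := by
          have h2 := Finset.add_sum_erase Finset.univ
            (fun i => w i * (p i j₀ - (k : ℝ))) (Finset.mem_univ i₀)
          linarith [hbal, h2]
        rcases lt_or_gt_of_ne hi₀k with hlt | hgt
        · -- p i₀ j₀ < k, find a positive one
          have hpos : 0 < ∑ i ∈ Finset.univ.erase i₀, w i * (p i j₀ - (k : ℝ)) := by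
            rw [herase]
            have : w i₀ * (p i₀ j₀ - (k : ℝ)) < 0 :=
              mul_neg_of_pos_of_neg hw₀pos (by linarith)
            linarith
          obtain ⟨i₁, hi₁mem, hi₁w, hi₁k⟩ := hfind' _ hpos
          exact ⟨i₁, i₀, Finset.ne_of_mem_erase hi₁mem, hi₁w, hw₀pos, hi₁k, hlt⟩
        · -- p i₀ j₀ > k, find a negative one
          have hneg : ∑ i ∈ Finset.univ.erase i₀, w i * (p i j₀ - (k : ℝ)) < 0 := by
            rw [herase]
            have : 0 < w i₀ * (p i₀ j₀ - (k : ℝ)) :=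
              mul_pos hw₀pos (by linarith)
            linarith
          obtain ⟨i₁, hi₁mem, hi₁w, hi₁k⟩ := hfind _ hneg
          exact ⟨i₀, i₁, (Finset.ne_of_mem_erase hi₁mem).symm, hw₀pos, hi₁w, hgt, hi₁k⟩
      obtain ⟨ip, im, hne, hwip, hwim, hpip, hpim⟩ := hmain
      -- both straddling atoms are real images of points of B
      have hipB : p ip ∈ R '' B := by
        rcases hp ip with h | h
        · exact h
        · exfalso
          have := Theight j₀ k (p ip) h
          rw [this] at hpip
          exact lt_irrefl _ hpip
      have himB : p im ∈ R '' B := by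
        rcases hp im with h | h
        · exact h
        · exfalso
          have := Theight j₀ k (p im) h
          rw [this] at hpim
          exact lt_irrefl _ hpim
      obtain ⟨zp, hzp, hzpe⟩ := hipB
      obtain ⟨zm, hzm, hzme⟩ := himB
      have hkzp : k < zp j₀ := by
        have : (k : ℝ) < ((zp j₀ : ℤ) : ℝ) := by
          show (k : ℝ) < R zp j₀
          rw [hzpe]; exact hpip
        exact_mod_cast this
      have hkzm : zm j₀ < k := by
        have : ((zm j₀ : ℤ) : ℝ) < (k : ℝ) := by
          show R zm j₀ < (k : ℝ)
          rw [hzme]; exact hpim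
        exact_mod_cast this
      have hq : pt zm zp j₀ k ∈ convexHull ℝ (R '' {z | z ∈ B ∧ z j₀ = k}) :=
        lemF hex j₀ k (dl zm zp + 1) zp hzp zm hzm (Nat.lt_succ_self _)
          (le_of_lt hkzm) (le_of_lt hkzp) (lt_trans hkzm hkzp)
      have hqk : pt zm zp j₀ k j₀ = (k : ℝ) := Theight j₀ k _ hq
      set a : ℝ := ((zp j₀ : ℤ) : ℝ) with ha
      set b : ℝ := ((zm j₀ : ℤ) : ℝ) with hb
      have hka' : (k : ℝ) < a := by rw [ha]; exact_mod_cast hkzp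
      have hbk' : b < (k : ℝ) := by rw [hb]; exact_mod_cast hkzm
      have hD : (0 : ℝ) < a - b := by linarith
      set α : ℝ := (a - (k : ℝ)) / (a - b) with hα
      set β : ℝ := ((k : ℝ) - b) / (a - b) with hβ
      have hα0 : 0 < α := div_pos (by linarith) hD
      have hβ0 : 0 < β := div_pos (by linarith) hD
      have hαβ : α + β = 1 := by
        rw [hα, hβ, ← add_div]
        field_simp
        ring
      have hqid : pt zm zp j₀ k = α • p im + β • p ip := by
        rw [← hzpe, ← hzme]
        funext j
        simp only [pt, Pi.add_apply, Pi.smul_apply, smul_eq_mul, R, hα, hβ, ← ha, ← hb]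
        field_simp
        try ring
      rcases le_total (w ip / β) (w im / α) with hmin | hmin
      · obtain ⟨ι', inst', p', w', h0, h1, h2, h3, hlt'⟩ :=
          surgery p w hw0 hw1 hp x hx ip im hne hwip hwim (ne_of_gt hpip)
            (pt zm zp j₀ k) hq hqk β α hβ0 hα0 (by linarith)
            (hqid.trans (add_comm _ _)) hmin
        exact IH ι' p' w' h0 h1 h2 x h3 hxk (by omega)
      · obtain ⟨ι', inst', p', w', h0, h1, h2, h3, hlt'⟩ :=
          surgery p w hw0 hw1 hp x hx im ip hne.symm hwim hwip (ne_of_lt hpim)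
            (pt zm zp j₀ k) hq hqk α β hα0 hβ0 hαβ hqid hmin
        exact IH ι' p' w' h0 h1 h2 x h3 hxk (by omega)


/-- Main lemma: integer points of the convex hull of an M-convex set belong to it. -/
lemma key : ∀ (N : ℕ) (B : Set (V N)), EXC B →
    ∀ x : V N, R x ∈ convexHull ℝ (R '' B) → x ∈ B := by
  intro N
  induction N with
  | zero =>
    intro B _ x hx
    rcases Set.eq_empty_or_nonempty (R '' B) with h | h
    · rw [h, convexHull_empty] at hx
      exact absurd hx (Set.notMem_empty _)
    · obtain ⟨_, b, hb, rfl⟩ := h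
      have hxb : x = b := funext fun i => Fin.elim0 i
      rwa [hxb]
  | succ N IH =>
    intro B hex x hx
    -- Step 1: `R x` is in the hull of the slice at height `k := x (Fin.last N)`.
    rw [mem_convexHull_iff_exists_fintype] at hx
    obtain ⟨ι, hι, w, z, hw0, hw1, hz, hzx⟩ := hx
    letI := hι
    have hxT : R x ∈ convexHull ℝ
        (R '' {zz | zz ∈ B ∧ zz (Fin.last N) = x (Fin.last N)}) := by
      apply transport hex (Fin.last N) (x (Fin.last N))
        ((Finset.univ.filter
          (fun i => w i ≠ 0 ∧ z i (Fin.last N) ≠ ((x (Fin.last N) : ℤ) : ℝ))).card)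
        ι z w hw0 hw1 (fun i => Or.inl (hz i)) (R x) hzx rfl le_rfl
    -- Step 2: project away the last coordinate.
    have hexB' : EXC ((fun (zz : V (N+1)) => fun i : Fin N => zz i.castSucc) ''
        {zz | zz ∈ B ∧ zz (Fin.last N) = x (Fin.last N)}) := by
      rintro z1 ⟨zz1, hzz1, rfl⟩ z2 ⟨zz2, hzz2, rfl⟩ u hlt
      obtain ⟨v, hv, hmem⟩ := hex zz1 hzz1.1 zz2 hzz2.1 u.castSucc hlt
      have hvlast : v ≠ Fin.last N := by
        intro h
        rw [h, hzz1.2, hzz2.2] at hv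
        exact lt_irrefl _ hv
      obtain ⟨v', rfl⟩ : ∃ v', v = v'.castSucc :=
        ⟨v.castPred hvlast, (Fin.castSucc_castPred v hvlast).symm⟩
      refine ⟨v', hv, ?_⟩
      refine ⟨ex zz1 u.castSucc v'.castSucc, ⟨hmem, ?_⟩, ?_⟩
      · have h1 : Fin.last N ≠ u.castSucc := (Fin.castSucc_lt_last u).ne'
        have h2 : Fin.last N ≠ v'.castSucc := (Fin.castSucc_lt_last v').ne'
        rw [ex_apply_other zz1 h1 h2]
        exact hzz1.2
      · funext i
        simp only [ex_apply, Pi.add_apply, Pi.sub_apply, Pi.single_apply, Fin.castSucc_inj]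
    have hL : R ((fun i : Fin N => x i.castSucc)) ∈ convexHull ℝ
        (R '' ((fun (zz : V (N+1)) => fun i : Fin N => zz i.castSucc) ''
          {zz | zz ∈ B ∧ zz (Fin.last N) = x (Fin.last N)})) := by
      set L : (Wr (N+1)) →ₗ[ℝ] (Wr N) :=
        LinearMap.funLeft ℝ ℝ (Fin.castSucc : Fin N → Fin (N+1)) with hLdef
      have himg : L '' (R '' {zz | zz ∈ B ∧ zz (Fin.last N) = x (Fin.last N)})
          = R '' ((fun (zz : V (N+1)) => fun i : Fin N => zz i.castSucc) ''
            {zz | zz ∈ B ∧ zz (Fin.last N) = x (Fin.last N)}) := by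
        rw [Set.image_image, Set.image_image]
        exact Set.image_congr fun a _ => rfl
      have hsub : convexHull ℝ (R '' {zz | zz ∈ B ∧ zz (Fin.last N) = x (Fin.last N)})
          ⊆ L ⁻¹' (convexHull ℝ
            (L '' (R '' {zz | zz ∈ B ∧ zz (Fin.last N) = x (Fin.last N)}))) :=
        convexHull_min (fun pq hpq => subset_convexHull ℝ _ ⟨pq, hpq, rfl⟩)
          ((convex_convexHull ℝ _).linear_preimage L)
      have hmem := hsub hxT
      rw [Set.mem_preimage, himg] at hmem
      exact hmem
    have hx' := IH _ hexB' (fun i : Fin N => x i.castSucc) hL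
    obtain ⟨zz, hzzBk, hzze⟩ := hx'
    have hzx : zz = x := by
      funext j
      refine Fin.lastCases ?_ (fun i => ?_) j
      · exact hzzBk.2
      · exact congrFun hzze i
    rw [← hzx]
    exact hzzBk.1


end MHoleFree

/-- Every (finite nonempty) M-convex set is hole-free: it equals the set of
integer points of its convex hull. -/
theorem M_convex_hole_free {K : ℕ} (hK : 0 < K)
    (B : Set (Fin K → ℤ)) (hne : B.Nonempty) (hfin : B.Finite)
    (hex : ∀ x ∈ B, ∀ y ∈ B, ∀ u : Fin K, y u < x u →
      ∃ v : Fin K, x v < y v ∧ x - Pi.single u 1 + Pi.single v 1 ∈ B) :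
    ∀ x : Fin K → ℤ,
      x ∈ B ↔ (fun j => (x j : ℝ)) ∈
        convexHull ℝ ((fun (v : Fin K → ℤ) (j : Fin K) => (v j : ℝ)) '' B) := by
  intro x
  constructor
  · intro hxB
    exact subset_convexHull ℝ _ ⟨x, hxB, rfl⟩
  · intro hx
    exact MHoleFree.key K B hex x hx
end

section
/- In the steepest descent algorithm on a finite M-convex set B with separable discretely convex objective f: starting from any x^(0) ∈ B and moving at each step to a strictly better point of the form x^(k) − e_u + e_v ∈ B (if one exists), the algorithm terminates at a global minimizer of f over B after at most (1/2)·‖x^(0) − x*‖_1 steps for some minimizer x*, where ‖·‖_1 is the ℓ1 norm. -/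
namespace MConvexSD


open Finset

variable {K : ℕ}

/-- The elementary exchange `x - e_u + e_v`. -/
def exch (x : Fin K → ℤ) (u v : Fin K) : Fin K → ℤ := x - Pi.single u 1 + Pi.single v 1

/-- ℓ¹ distance. -/
def dist' (x y : Fin K → ℤ) : ℤ := ∑ j, |x j - y j|

lemma exch_apply (x : Fin K → ℤ) (u v j : Fin K) :
    exch x u v j = x j - (if j = u then 1 else 0) + (if j = v then 1 else 0) := by
  simp [exch, Pi.single_apply]

lemma exch_same (x : Fin K → ℤ) (u : Fin K) : exch x u u = x := by
  simp [exch]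

lemma sum_exch (x : Fin K → ℤ) (u v : Fin K) : ∑ j, exch x u v j = ∑ j, x j := by
  simp [exch, Finset.sum_add_distrib, Finset.sum_sub_distrib]

lemma abs_val (a : ℤ) : |a| = if 0 ≤ a then a else -a := by
  split_ifs with h
  · exact abs_of_nonneg h
  · exact abs_of_neg (lt_of_not_ge h)

lemma dist'_nonneg (x y : Fin K → ℤ) : 0 ≤ dist' x y :=
  Finset.sum_nonneg fun j _ => abs_nonneg _

lemma dist'_self (x : Fin K → ℤ) : dist' x x = 0 := by simp [dist']

lemma dist'_symm (x y : Fin K → ℤ) : dist' x y = dist' y x := by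
  unfold dist'; exact Finset.sum_congr rfl fun j _ => abs_sub_comm _ _

lemma dist'_eq_zero {x y : Fin K → ℤ} (h : dist' x y = 0) : x = y := by
  funext j
  have h2 := (Finset.sum_eq_zero_iff_of_nonneg (fun i (_ : i ∈ univ) => abs_nonneg (x i - y i))).mp h j (mem_univ j)
  have := abs_eq_zero.mp h2
  omega

lemma dist'_pos {x y : Fin K → ℤ} (h : x ≠ y) : 0 < dist' x y := by
  rcases lt_or_eq_of_le (dist'_nonneg x y) with h1 | h1
  · exact h1
  · exact absurd (dist'_eq_zero h1.symm) h

lemma sum_split {M : Type*} [AddCommMonoid M] (u v : Fin K) (h : u ≠ v) (φ : Fin K → M) :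
    ∑ j, φ j = φ u + (φ v + ∑ j ∈ (univ.erase u).erase v, φ j) := by
  rw [← Finset.add_sum_erase _ _ (mem_univ u)]
  congr 1
  rw [← Finset.add_sum_erase _ _ (mem_erase.mpr ⟨h.symm, mem_univ v⟩)]

lemma exch_apply_u {x : Fin K → ℤ} {u v : Fin K} (h : u ≠ v) : exch x u v u = x u - 1 := by
  rw [exch_apply, if_pos rfl, if_neg h]; ring

lemma exch_apply_v {x : Fin K → ℤ} {u v : Fin K} (h : u ≠ v) : exch x u v v = x v + 1 := by
  rw [exch_apply, if_neg (Ne.symm h), if_pos rfl]; ring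

lemma exch_apply_other {x : Fin K → ℤ} {u v j : Fin K} (h1 : j ≠ u) (h2 : j ≠ v) :
    exch x u v j = x j := by
  rw [exch_apply, if_neg h1, if_neg h2]; ring

lemma dist'_exch_diff {u v : Fin K} (h : u ≠ v) (x y : Fin K → ℤ) :
    dist' (exch x u v) y
      = dist' x y + (|x u - 1 - y u| - |x u - y u|) + (|x v + 1 - y v| - |x v - y v|) := by
  unfold dist'
  rw [sum_split u v h (φ := fun j => |exch x u v j - y j|),
      sum_split u v h (φ := fun j => |x j - y j|)]
  have htail : ∑ j ∈ (univ.erase u).erase v, |exch x u v j - y j|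
      = ∑ j ∈ (univ.erase u).erase v, |x j - y j| := by
    refine Finset.sum_congr rfl fun j hj => ?_
    have hjv : j ≠ v := (mem_erase.mp hj).1
    have hju : j ≠ u := (mem_erase.mp (mem_erase.mp hj).2).1
    rw [exch_apply_other hju hjv]
  rw [htail, exch_apply_u h, exch_apply_v h]
  ring

lemma dist'_exch_down {u v : Fin K} {x y : Fin K → ℤ} (hu : y u < x u) (hv : x v < y v) :
    dist' (exch x u v) y = dist' x y - 2 := by
  have h : u ≠ v := by intro h; rw [h] at hu; omega
  rw [dist'_exch_diff h]
  have e1 : |x u - 1 - y u| = |x u - y u| - 1 := by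
    simp only [abs_val]; split_ifs <;> omega
  have e2 : |x v + 1 - y v| = |x v - y v| - 1 := by
    simp only [abs_val]; split_ifs <;> omega
  omega

lemma dist'_exch_self {u v : Fin K} (h : u ≠ v) (y : Fin K → ℤ) :
    dist' (exch y u v) y = 2 := by
  rw [dist'_exch_diff h, dist'_self]
  simp only [abs_val]; split_ifs <;> omega

lemma abs_mod_two (a : ℤ) : |a| % 2 = a % 2 := by
  rw [abs_val]; split_ifs <;> omega

lemma dist'_mod_two {x y : Fin K → ℤ} (h : ∑ j, x j = ∑ j, y j) : dist' x y % 2 = 0 := by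
  have h1 : dist' x y % 2 = (∑ j, (x j - y j)) % 2 := by
    unfold dist'
    rw [Finset.sum_int_mod, Finset.sum_int_mod univ 2 (fun j => x j - y j)]
    congr 1
    exact Finset.sum_congr rfl fun j _ => abs_mod_two _
  rw [Finset.sum_sub_distrib, h, sub_self] at h1
  simpa using h1

lemma exists_pos {x y : Fin K → ℤ} (hs : ∑ j, x j = ∑ j, y j) (hne : x ≠ y) :
    ∃ u, y u < x u := by
  by_contra h
  push_neg at h
  obtain ⟨j, hj⟩ := Function.ne_iff.mp hne
  have hj' : x j < y j := lt_of_le_of_ne (h j) hj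
  have : ∑ j, x j < ∑ j, y j :=
    Finset.sum_lt_sum (fun i _ => h i) ⟨j, mem_univ j, hj'⟩
  omega

lemma dist2_struct {x y : Fin K → ℤ} (hd : dist' x y = 2) (hs : ∑ j, x j = ∑ j, y j) :
    ∃ p q, p ≠ q ∧ x = exch y p q := by
  have hne : x ≠ y := by
    intro h; rw [h, dist'_self] at hd; omega
  obtain ⟨q, hq⟩ := exists_pos hs hne
  obtain ⟨p, hp⟩ := exists_pos hs.symm hne.symm
  have hpq : p ≠ q := by intro h; rw [h] at hp; omega
  refine ⟨p, q, hpq, ?_⟩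
  have hsplit := sum_split p q hpq (φ := fun j => |x j - y j|)
  rw [show (∑ j, |x j - y j|) = dist' x y from rfl, hd] at hsplit
  have htail0 : ∑ j ∈ (univ.erase p).erase q, |x j - y j| = 0 ∧ |x p - y p| = 1 ∧ |x q - y q| = 1 := by
    have htn : 0 ≤ ∑ j ∈ (univ.erase p).erase q, |x j - y j| :=
      Finset.sum_nonneg fun j _ => abs_nonneg _
    have h1 : 1 ≤ |x p - y p| := by rw [abs_val]; split_ifs <;> omega
    have h2 : 1 ≤ |x q - y q| := by rw [abs_val]; split_ifs <;> omega
    omega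
  funext j
  by_cases hjp : j = p
  · subst hjp
    have := htail0.2.1
    rw [exch_apply_u hpq]
    rw [abs_val] at this; split_ifs at this <;> omega
  by_cases hjq : j = q
  · subst hjq
    have := htail0.2.2
    rw [exch_apply_v hpq]
    rw [abs_val] at this; split_ifs at this <;> omega
  · have hj0 := (Finset.sum_eq_zero_iff_of_nonneg
      (fun i (_ : i ∈ (univ.erase p).erase q) => abs_nonneg (x i - y i))).mp htail0.1 j
      (by simp [hjp, hjq])
    rw [exch_apply_other hjp hjq]
    have := abs_eq_zero.mp hj0
    omega

lemma sums_eq {B : Finset (Fin K → ℤ)}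
    (hex : ∀ x ∈ B, ∀ y ∈ B, ∀ u : Fin K, y u < x u →
      ∃ v : Fin K, x v < y v ∧ exch x u v ∈ B) :
    ∀ n : ℕ, ∀ x ∈ B, ∀ y ∈ B, (dist' x y).toNat ≤ n → ∑ j, x j = ∑ j, y j := by
  intro n
  induction n using Nat.strong_induction_on with
  | _ n IH =>
    intro x hx y hy hd
    by_cases hxy : x = y
    · rw [hxy]
    by_cases hpos : ∃ u, y u < x u
    · obtain ⟨u, hu⟩ := hpos
      obtain ⟨v, hv, hB⟩ := hex x hx y hy u hu
      have hdd : dist' (exch x u v) y = dist' x y - 2 := dist'_exch_down hu hv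
      have hnn := dist'_nonneg (exch x u v) y
      have hnn2 := dist'_nonneg x y
      have hlt : (dist' (exch x u v) y).toNat < n := by omega
      have := IH _ hlt (exch x u v) hB y hy (le_refl _)
      rw [sum_exch] at this
      exact this
    · push_neg at hpos
      obtain ⟨j, hj⟩ := Function.ne_iff.mp hxy
      have hj' : x j < y j := lt_of_le_of_ne (hpos j) hj
      obtain ⟨w, hw, _⟩ := hex y hy x hx j hj'
      exact absurd (hpos w) (not_le.mpr hw)

theorem SE {B : Finset (Fin K → ℤ)}
    (hex : ∀ x ∈ B, ∀ y ∈ B, ∀ u : Fin K, y u < x u →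
      ∃ v : Fin K, x v < y v ∧ exch x u v ∈ B) :
    ∀ n : ℕ, ∀ x ∈ B, ∀ y ∈ B, (dist' x y).toNat ≤ n → ∀ u : Fin K, y u < x u →
      ∃ v : Fin K, x v < y v ∧ exch x u v ∈ B ∧ exch y v u ∈ B := by
  intro n
  induction n using Nat.strong_induction_on with
  | _ n IH =>
  intro x hx y hy hdn u hu
  by_contra Hc
  push_neg at Hc
  -- Hc : ∀ v, x v < y v → exch x u v ∈ B → exch y v u ∉ B
  obtain ⟨v₁, hv₁, hA⟩ := hex x hx y hy u hu
  have huv₁ : u ≠ v₁ := by intro h; rw [h] at hu; omega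
  have hYv₁ : exch y v₁ u ∉ B := Hc v₁ hv₁ hA
  by_cases hAy : exch x u v₁ = y
  · -- distance-2 case: exch y v₁ u = x
    have hid : exch y v₁ u = x := by
      rw [← hAy]; simp only [exch]; abel
    exact hYv₁ (hid ▸ hx)
  -- ∑ x = ∑ y
  have hsum : ∑ j, x j = ∑ j, y j :=
    sums_eq hex (dist' x y).toNat x hx y hy (le_refl _)
  have hdA : dist' (exch x u v₁) y = dist' x y - 2 := dist'_exch_down hu hv₁
  have hdApos : 0 < dist' (exch x u v₁) y := dist'_pos hAy
  have hmod : dist' x y % 2 = 0 := dist'_mod_two hsum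
  have hd4 : 4 ≤ dist' x y := by omega
  by_cases h4 : dist' x y = 4
  · -- base case distance 4
    have hsumA : ∑ j, exch x u v₁ j = ∑ j, y j := by rw [sum_exch]; exact hsum
    obtain ⟨p, q, hpq, hApq⟩ := dist2_struct (by omega : dist' (exch x u v₁) y = 2) hsumA
    -- coordinates of A
    have hq : y q < exch x u v₁ q := by
      rw [hApq, exch_apply_v hpq]; omega
    have hp : exch x u v₁ p < y p := by
      rw [hApq, exch_apply_u hpq]; omega
    have hqv₁ : q ≠ v₁ := by
      intro h; rw [h, exch_apply_v huv₁] at hq; omega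
    have hpu : p ≠ u := by
      intro h; rw [h, exch_apply_u huv₁] at hp; omega
    -- master coordinate formula for x - y
    have hco : ∀ j, x j = y j + (if j = u then 1 else 0) + (if j = q then 1 else 0)
        - (if j = v₁ then 1 else 0) - (if j = p then 1 else 0) := by
      intro j
      have h1 := congrFun hApq j
      rw [exch_apply, exch_apply] at h1
      split_ifs at h1 ⊢ <;> omega
    -- function identity: x = y + P u + P q - P v₁ - P p
    have hxf : x = y + Pi.single u 1 + Pi.single q 1 - Pi.single v₁ 1 - Pi.single p 1 := by
      have h1 : exch x u v₁ = exch y p q := hApq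
      simp only [exch] at h1
      linear_combination h1
    by_cases hqu : q = u
    · -- hex(y,x,v₁) forces v = u
      obtain ⟨vv, hvv, hBvv⟩ := hex y hy x hx v₁ hv₁
      have hvvu : vv = u := by
        by_contra hne
        have h2 := hco vv
        rw [if_neg hne, if_neg (fun h => hne (h.trans hqu))] at h2
        split_ifs at h2 <;> omega
      rw [hvvu] at hBvv
      exact hYv₁ hBvv
    -- q ≠ u
    have hxq : y q < x q := by
      have h2 := hco q
      rw [if_neg hqu, if_pos rfl, if_neg hqv₁, if_neg (Ne.symm hpq)] at h2
      omega
    by_cases hv₁p : v₁ = p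
    · -- x = y + e_u + e_q - 2 e_{v₁}
      obtain ⟨vv, hvv, hBvv⟩ := hex x hx y hy q hxq
      have hvvv₁ : vv = v₁ := by
        by_contra hne
        have h2 := hco vv
        have hvp : vv ≠ p := fun h => hne (h.trans hv₁p.symm)
        rw [if_neg hvp, if_neg hne] at h2
        split_ifs at h2 <;> omega
      rw [hvvv₁] at hBvv
      have hid : exch x q v₁ = exch y v₁ u := by
        rw [hxf, hv₁p]; simp only [exch]; abel
      rw [hid] at hBvv
      exact hYv₁ hBvv
    · -- all four distinct
      obtain ⟨vv, hvv, hBvv⟩ := hex x hx y hy q hxq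
      have hvvcase : vv = v₁ ∨ vv = p := by
        by_contra hne
        push_neg at hne
        have h2 := hco vv
        rw [if_neg hne.1, if_neg hne.2] at h2
        split_ifs at h2 <;> omega
      rcases hvvcase with h | h
      · -- exch x q v₁ = exch y p u ∈ B
        rw [h] at hBvv
        have hYp : exch y p u ∈ B := by
          have hid : exch x q v₁ = exch y p u := by
            rw [hxf]; simp only [exch]; abel
          rwa [hid] at hBvv
        obtain ⟨ww, hww, hBww⟩ := hex y hy x hx v₁ hv₁
        have hwwcase : ww = u ∨ ww = q := by
          by_contra hne
          push_neg at hne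
          have h2 := hco ww
          rw [if_neg hne.1, if_neg hne.2] at h2
          split_ifs at h2 <;> omega
        rcases hwwcase with h2 | h2
        · rw [h2] at hBww; exact hYv₁ hBww
        · rw [h2] at hBww
          have hXp : exch x u p ∈ B := by
            have hid : exch y v₁ q = exch x u p := by
              rw [hxf]; simp only [exch]; abel
            rwa [hid] at hBww
          have hxp : x p < y p := by
            have h3 := hco p
            have hpv : p ≠ v₁ := fun h => hv₁p h.symm
            rw [if_neg hpu, if_neg hpq, if_neg hpv, if_pos rfl] at h3
            omega
          exact Hc p hxp hXp hYp
      · rw [h] at hBvv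
        have hid : exch x q p = exch y v₁ u := by
          rw [hxf]; simp only [exch]; abel
        rw [hid] at hBvv
        exact hYv₁ hBvv
  · -- main inductive chain, dist' x y ≥ 6
    have h6 : 6 ≤ dist' x y := by omega
    have hn6 : 6 ≤ n := by omega
    have hAB : exch x u v₁ ∈ B := hA
    have hsumA : ∑ j, exch x u v₁ j = ∑ j, y j := by rw [sum_exch]; exact hsum
    obtain ⟨u₁, hu₁A⟩ := exists_pos hsumA hAy
    have hu₁v₁ : u₁ ≠ v₁ := by
      intro h; rw [h, exch_apply_v huv₁] at hu₁A; omega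
    have hu₁x : y u₁ < x u₁ := by
      by_cases h : u₁ = u
      · rw [h]; exact hu
      · rwa [exch_apply_other h hu₁v₁] at hu₁A
    have hu₁v₂pre : True := trivial
    -- SE on (A, y, u₁)
    obtain ⟨v₂, hv₂A, _, hzB⟩ := IH (n-2) (by omega) (exch x u v₁) hAB y hy (by omega) u₁ hu₁A
    have hv₂u : v₂ ≠ u := by
      intro h; rw [h, exch_apply_u huv₁] at hv₂A; omega
    have hxv₂ : x v₂ < y v₂ := by
      by_cases h : v₂ = v₁
      · rw [h] at hv₂A ⊢; rw [exch_apply_v huv₁] at hv₂A; omega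
      · rwa [exch_apply_other hv₂u h] at hv₂A
    have hu₁v₂ : u₁ ≠ v₂ := by intro h; rw [h] at hu₁x; omega
    -- z := exch y v₂ u₁ ∈ B
    have hzu : exch y v₂ u₁ u < x u := by
      by_cases h : u₁ = u
      · rw [← h, exch_apply_v (Ne.symm hu₁v₂)]
        rw [h] at hu₁A
        rw [exch_apply_u huv₁] at hu₁A
        rw [← h] at hu₁A
        omega
      · rw [exch_apply_other (Ne.symm hv₂u) (Ne.symm h)]; exact hu
    have hdz : dist' x (exch y v₂ u₁) = dist' x y - 2 := by
      rw [dist'_symm, dist'_exch_down hxv₂ hu₁x, dist'_symm]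
    -- SE on (x, z, u)
    obtain ⟨w, hwz, hXw, htB⟩ := IH (n-2) (by omega) x hx (exch y v₂ u₁) hzB (by omega) u hzu
    have hwu : w ≠ u := by intro h; rw [h] at hwz; omega
    have hwu₁ : w ≠ u₁ := by
      intro h
      rw [h, exch_apply_v (Ne.symm hu₁v₂)] at hwz; omega
    have hzw : exch y v₂ u₁ w = y w - (if w = v₂ then 1 else 0) := by
      rw [exch_apply, if_neg hwu₁]; ring
    have hxw : x w < y w := by
      rw [hzw] at hwz; split_ifs at hwz <;> omega
    have hYw : exch y w u ∉ B := Hc w hxw hXw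
    have hzu' : exch y v₂ u₁ u = y u + (if u₁ = u then 1 else 0) := by
      rw [exch_apply, if_neg (Ne.symm hv₂u)]
      by_cases h : u = u₁
      · rw [if_pos h, if_pos h.symm]; ring
      · rw [if_neg h, if_neg (Ne.symm h)]; ring
    have hdt : dist' (exch (exch y v₂ u₁) w u) y = 4 := by
      rw [dist'_exch_diff hwu, dist'_exch_self (Ne.symm hu₁v₂), hzw, hzu']
      simp only [abs_val]; split_ifs <;> omega
    have htu : y u < exch (exch y v₂ u₁) w u u := by
      rw [exch_apply_v hwu, hzu']
      split_ifs <;> omega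
    obtain ⟨v₃, hv₃t, hrB', hYv₃⟩ := IH 4 (by omega) (exch (exch y v₂ u₁) w u) htB y hy (by omega) u htu
    have hv₃co : exch (exch y v₂ u₁) w u v₃ = y v₃ - (if v₃ = v₂ then 1 else 0)
        + (if v₃ = u₁ then 1 else 0) - (if v₃ = w then 1 else 0) + (if v₃ = u then 1 else 0) := by
      rw [exch_apply, exch_apply]
    have hv₃case : v₃ = v₂ ∨ v₃ = w := by
      by_contra hne; push_neg at hne
      rw [hv₃co, if_neg hne.1, if_neg hne.2] at hv₃t
      split_ifs at hv₃t <;> omega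
    rcases hv₃case with h3 | h3
    · -- v₃ = v₂
      rw [h3] at hYv₃ hrB'
      by_cases huu₁ : u₁ = u
      · have hid : exch (exch (exch y v₂ u₁) w u) u v₂ = exch y w u := by
          rw [huu₁]; simp only [exch]; abel
        rw [hid] at hrB'
        exact hYw hrB'
      · have hid : exch (exch (exch y v₂ u₁) w u) u v₂ = exch y w u₁ := by
          simp only [exch]; abel
        rw [hid] at hrB'
        have hru : exch y w u₁ u = y u :=
          exch_apply_other (Ne.symm hwu) (fun h => huu₁ h.symm)
        have hdr : dist' x (exch y w u₁) = dist' x y - 2 := by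
          rw [dist'_symm, dist'_exch_down hxw hu₁x, dist'_symm]
        obtain ⟨w₂, hw₂r, hXw₂, hsB⟩ := IH (n-2) (by omega) x hx (exch y w u₁) hrB' (by omega) u
          (by rw [hru]; exact hu)
        have hw₂u : w₂ ≠ u := by intro h; rw [h, hru] at hw₂r; omega
        have hw₂u₁ : w₂ ≠ u₁ := by
          intro h; rw [h, exch_apply_v hwu₁] at hw₂r; omega
        have hrw₂ : exch y w u₁ w₂ = y w₂ - (if w₂ = w then 1 else 0) := by
          rw [exch_apply, if_neg hw₂u₁]; ring
        have hxw₂ : x w₂ < y w₂ := by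
          rw [hrw₂] at hw₂r; split_ifs at hw₂r <;> omega
        have hYw₂ : exch y w₂ u ∉ B := Hc w₂ hxw₂ hXw₂
        have hds : dist' (exch (exch y w u₁) w₂ u) y = 4 := by
          rw [dist'_exch_diff hw₂u, dist'_exch_self hwu₁, hrw₂, hru]
          simp only [abs_val]; split_ifs <;> omega
        have hsu : y u < exch (exch y w u₁) w₂ u u := by
          rw [exch_apply_v hw₂u, hru]; omega
        obtain ⟨v₄, hv₄s, _, hYv₄⟩ := IH 4 (by omega) (exch (exch y w u₁) w₂ u) hsB y hy (by omega) u hsu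
        have hv₄co : exch (exch y w u₁) w₂ u v₄ = y v₄ - (if v₄ = w then 1 else 0)
            + (if v₄ = u₁ then 1 else 0) - (if v₄ = w₂ then 1 else 0) + (if v₄ = u then 1 else 0) := by
          rw [exch_apply, exch_apply]
        have hv₄case : v₄ = w ∨ v₄ = w₂ := by
          by_contra hne; push_neg at hne
          rw [hv₄co, if_neg hne.1, if_neg hne.2] at hv₄s
          split_ifs at hv₄s <;> omega
        rcases hv₄case with h4' | h4'
        · rw [h4'] at hYv₄; exact hYw hYv₄
        · rw [h4'] at hYv₄; exact hYw₂ hYv₄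
    · -- v₃ = w
      rw [h3] at hYv₃
      exact hYw hYv₃

section Conv

variable (f : Fin K → ℤ → ℝ)
variable (F : (Fin K → ℤ) → ℝ)

lemma slope_mono (hconv : ∀ j : Fin K, ∀ t : ℤ, 2 * f j t ≤ f j (t - 1) + f j (t + 1))
    (j : Fin K) {t t' : ℤ} (h : t ≤ t') :
    f j (t + 1) - f j t ≤ f j (t' + 1) - f j t' := by
  refine Int.le_induction (motive := fun s _ => f j (t + 1) - f j t ≤ f j (s + 1) - f j s)
    (le_refl _) (fun n _ ih => ?_) t' h
  have hc := hconv j (n + 1)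
  have he : n + 1 - 1 = n := by ring
  rw [he] at hc
  linarith

lemma F_exch (hF : ∀ x, F x = ∑ j, f j (x j)) {u v : Fin K} (h : u ≠ v) (x : Fin K → ℤ) :
    F (exch x u v) = F x - f u (x u) + f u (x u - 1) - f v (x v) + f v (x v + 1) := by
  rw [hF, hF]
  rw [sum_split u v h (φ := fun j => f j (exch x u v j)),
      sum_split u v h (φ := fun j => f j (x j))]
  have htail : ∑ j ∈ ((univ.erase u).erase v), f j (exch x u v j)
      = ∑ j ∈ ((univ.erase u).erase v), f j (x j) := by
    refine Finset.sum_congr rfl fun j hj => ?_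
    have hjv : j ≠ v := (mem_erase.mp hj).1
    have hju : j ≠ u := (mem_erase.mp (mem_erase.mp hj).2).1
    rw [exch_apply_other hju hjv]
  rw [htail, exch_apply_u h, exch_apply_v h]
  ring

lemma four_point (hconv : ∀ j : Fin K, ∀ t : ℤ, 2 * f j t ≤ f j (t - 1) + f j (t + 1))
    (hF : ∀ x, F x = ∑ j, f j (x j)) {u v : Fin K} {x y : Fin K → ℤ}
    (hu : y u < x u) (hv : x v < y v) :
    F (exch x u v) + F (exch y v u) ≤ F x + F y := by
  have huv : u ≠ v := by intro h; rw [h] at hu; omega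
  rw [F_exch f F hF huv x, F_exch f F hF (Ne.symm huv) y]
  have h1 : f u (y u + 1) - f u (y u) ≤ f u ((x u - 1) + 1) - f u (x u - 1) :=
    slope_mono f hconv u (by omega)
  have h2 : f v (x v + 1) - f v (x v) ≤ f v ((y v - 1) + 1) - f v (y v - 1) :=
    slope_mono f hconv v (by omega)
  have e1 : (x u - 1) + 1 = x u := by ring
  have e2 : (y v - 1) + 1 = y v := by ring
  rw [e1] at h1
  rw [e2] at h2
  linarith


variable {B : Finset (Fin K → ℤ)}

lemma local_global
    (hex : ∀ x ∈ B, ∀ y ∈ B, ∀ u : Fin K, y u < x u →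
      ∃ v : Fin K, x v < y v ∧ exch x u v ∈ B)
    (hconv : ∀ j : Fin K, ∀ t : ℤ, 2 * f j t ≤ f j (t - 1) + f j (t + 1))
    (hF : ∀ x, F x = ∑ j, f j (x j))
    {x : Fin K → ℤ} (hx : x ∈ B)
    (hloc : ∀ u v, exch x u v ∈ B → F x ≤ F (exch x u v)) :
    ∀ n : ℕ, ∀ y ∈ B, (dist' x y).toNat ≤ n → F x ≤ F y := by
  intro n
  induction n using Nat.strong_induction_on with
  | _ n IH =>
  intro y hy hdn
  by_cases hxy : x = y
  · rw [hxy]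
  have hsum : ∑ j, x j = ∑ j, y j := sums_eq hex (dist' x y).toNat x hx y hy (le_refl _)
  obtain ⟨u, hu⟩ := exists_pos hsum hxy
  obtain ⟨v, hv, hxB, hyB⟩ := SE hex (dist' x y).toNat x hx y hy (le_refl _) u hu
  have hd1 : dist' x (exch y v u) = dist' x y - 2 := by
    rw [dist'_symm, dist'_exch_down hv hu, dist'_symm]
  have hd2 : 0 ≤ dist' x (exch y v u) := dist'_nonneg _ _
  have hd0 : 0 < dist' x y := dist'_pos hxy
  have hIH : F x ≤ F (exch y v u) :=
    IH (n-1) (by omega) (exch y v u) hyB (by omega)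
  have h4 := four_point f F hconv hF hu hv
  have hl := hloc u v hxB
  linarith

/-- Case A/B of the steepest-descent distance-decrease argument. -/
lemma caseAB
    (hex : ∀ x ∈ B, ∀ y ∈ B, ∀ u : Fin K, y u < x u →
      ∃ v : Fin K, x v < y v ∧ exch x u v ∈ B)
    (hconv : ∀ j : Fin K, ∀ t : ℤ, 2 * f j t ≤ f j (t - 1) + f j (t + 1))
    (hF : ∀ x, F x = ∑ j, f j (x j))
    {x : Fin K → ℤ} (hx : x ∈ B) {u v : Fin K} (huv : u ≠ v)
    (hx1B : exch x u v ∈ B)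
    (hbest : ∀ p q, exch x p q ∈ B → F (exch x u v) ≤ F (exch x p q))
    (μ : ℤ)
    (hminμ : ∀ w ∈ B, (∀ y ∈ B, F w ≤ F y) → μ ≤ dist' x w)
    {m : Fin K → ℤ} (hmB : m ∈ B) (hmopt : ∀ y ∈ B, F m ≤ F y)
    (hmd : dist' x m = μ) (hmu : m u < x u) :
    ∃ z ∈ B, (∀ y ∈ B, F z ≤ F y) ∧ dist' (exch x u v) z ≤ μ - 2 := by
  by_cases hv' : x v < m v
  · refine ⟨m, hmB, hmopt, ?_⟩
    rw [dist'_exch_down hmu hv', hmd]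
  push_neg at hv'
  -- SE (x1, m, v)
  have hmv1 : m v < exch x u v v := by rw [exch_apply_v huv]; omega
  obtain ⟨w, hw, hmid, hzB⟩ :=
    SE hex (dist' (exch x u v) m).toNat (exch x u v) hx1B m hmB (le_refl _) v hmv1
  have hwu : w ≠ u := by
    intro h
    rw [h, exch_apply_u huv] at hw
    omega
  have hwv : w ≠ v := by
    intro h; rw [h, exch_apply_v huv] at hw; omega
  have hxwm : x w < m w := by have h := hw; rwa [exch_apply_other hwu hwv] at h
  have hid : exch (exch x u v) v w = exch x u w := by simp only [exch]; abel
  have hXw : exch x u w ∈ B := by rwa [hid] at hmid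
  have hb := hbest u w hXw
  have h4 := four_point f F hconv hF (x := exch x u v) (y := m) (u := v) (v := w) hmv1 hw
  rw [hid] at h4
  have hzopt : ∀ y ∈ B, F (exch m w v) ≤ F y := fun y hy => le_trans (by linarith) (hmopt y hy)
  rcases lt_or_eq_of_le hv' with hlt | heq
  · exfalso
    have hdd : dist' (exch m w v) x = dist' m x - 2 :=
      dist'_exch_down (x := m) (y := x) (u := w) (v := v) hxwm hlt
    have h5 := hminμ (exch m w v) hzB hzopt
    rw [dist'_symm x (exch m w v), hdd, dist'_symm m x, hmd] at h5
    omega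
  · have hzu : exch m w v u = m u :=
      exch_apply_other (Ne.symm hwu) huv
    have hzv : exch m w v v = m v + 1 := exch_apply_v hwv
    have hdz : dist' x (exch m w v) = μ := by
      rw [dist'_symm, dist'_exch_diff hwv m x, dist'_symm m x, hmd]
      simp only [abs_val]; split_ifs <;> omega
    refine ⟨exch m w v, hzB, hzopt, ?_⟩
    have hfinal : dist' (exch x u v) (exch m w v) = dist' x (exch m w v) - 2 := by
      apply dist'_exch_down
      · rw [hzu]; exact hmu
      · rw [hzv]; omega
    rw [hfinal, hdz]

/-- Steepest descent step decreases the distance to the set of minimizers by 2. -/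
lemma steep
    (hex : ∀ x ∈ B, ∀ y ∈ B, ∀ u : Fin K, y u < x u →
      ∃ v : Fin K, x v < y v ∧ exch x u v ∈ B)
    (hconv : ∀ j : Fin K, ∀ t : ℤ, 2 * f j t ≤ f j (t - 1) + f j (t + 1))
    (hF : ∀ x, F x = ∑ j, f j (x j))
    {x : Fin K → ℤ} (hx : x ∈ B) {u v : Fin K}
    (hx1B : exch x u v ∈ B) (hlt : F (exch x u v) < F x)
    (hbest : ∀ p q, exch x p q ∈ B → F (exch x u v) ≤ F (exch x p q))
    {ms : Fin K → ℤ} (hmB : ms ∈ B) (hmopt : ∀ y ∈ B, F ms ≤ F y)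
    (hmin : ∀ w ∈ B, (∀ y ∈ B, F w ≤ F y) → dist' x ms ≤ dist' x w) :
    ∃ z ∈ B, (∀ y ∈ B, F z ≤ F y) ∧ dist' (exch x u v) z ≤ dist' x ms - 2 := by
  have huv : u ≠ v := by
    intro h; rw [h, exch_same] at hlt; exact lt_irrefl _ hlt
  by_cases hcu : ms u < x u
  · exact caseAB f F hex hconv hF hx huv hx1B hbest (dist' x ms) hmin hmB hmopt rfl hcu
  · push_neg at hcu
    have hxu1 : exch x u v u < ms u := by rw [exch_apply_u huv]; omega
    obtain ⟨w, hw, hB1, hB2⟩ :=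
      SE hex (dist' ms (exch x u v)).toNat ms hmB (exch x u v) hx1B (le_refl _) u hxu1
    by_cases hwv : w = v
    · exfalso
      have h4 := four_point f F hconv hF (x := ms) (y := exch x u v) (u := u) (v := w) hxu1 hw
      rw [hwv] at h4 hB1
      have hid : exch (exch x u v) v u = x := by simp only [exch]; abel
      rw [hid] at h4
      have := hmopt (exch ms u v) hB1
      linarith
    · have hwu : w ≠ u := by
        intro h; rw [h, exch_apply_u huv] at hw; omega
      have hmw : ms w < x w := by have h := hw; rwa [exch_apply_other hwu hwv] at h
      have hid : exch (exch x u v) w u = exch x w v := by simp only [exch]; abel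
      have hXwv : exch x w v ∈ B := by rwa [hid] at hB2
      have hb := hbest w v hXwv
      have h4 := four_point f F hconv hF (x := ms) (y := exch x u v) (u := u) (v := w) hxu1 hw
      rw [hid] at h4
      have hzopt : ∀ y ∈ B, F (exch ms u w) ≤ F y := fun y hy => le_trans (by linarith) (hmopt y hy)
      rcases lt_or_eq_of_le hcu with hlt2 | heq
      · exfalso
        have hdd : dist' (exch ms u w) x = dist' ms x - 2 :=
          dist'_exch_down (x := ms) (y := x) (u := u) (v := w) hlt2 hmw
        have h5 := hmin (exch ms u w) hB1 hzopt
        rw [dist'_symm x (exch ms u w), hdd, dist'_symm ms x] at h5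
        omega
      · have huw : u ≠ w := Ne.symm hwu
        have hz0u : exch ms u w u = ms u - 1 := exch_apply_u huw
        have hdz : dist' x (exch ms u w) = dist' x ms := by
          rw [dist'_symm, dist'_exch_diff huw ms x, dist'_symm ms x]
          simp only [abs_val]; split_ifs <;> omega
        exact caseAB f F hex hconv hF hx huv hx1B hbest (dist' x ms) hmin hB1 hzopt hdz
          (by rw [hz0u]; omega)

end Conv

end MConvexSD

open MConvexSD in
/-- Steepest descent on a finite M-convex set with a separable discretely
convex objective terminates at a global minimizer after at most
`(1/2)·‖x⁽⁰⁾ − x*‖₁` steps for some minimizer `x*`. -/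
theorem steepest_descent_terminates {K : ℕ} (hK : 0 < K)
    (B : Finset (Fin K → ℤ)) (hne : B.Nonempty)
    (hex : ∀ x ∈ B, ∀ y ∈ B, ∀ u : Fin K, y u < x u →
      ∃ v : Fin K, x v < y v ∧ x - Pi.single u 1 + Pi.single v 1 ∈ B)
    (f : Fin K → ℤ → ℝ)
    (hconv : ∀ j : Fin K, ∀ t : ℤ, 2 * f j t ≤ f j (t - 1) + f j (t + 1))
    (F : (Fin K → ℤ) → ℝ) (hF : ∀ x, F x = ∑ j, f j (x j))
    (seq : ℕ → (Fin K → ℤ)) (hmem : ∀ k, seq k ∈ B)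
    -- if an improving exchange exists, the algorithm moves to a best exchange
    (hstep : ∀ k,
      (∃ u v : Fin K, seq k - Pi.single u 1 + Pi.single v 1 ∈ B ∧
          F (seq k - Pi.single u 1 + Pi.single v 1) < F (seq k)) →
        (∃ u v : Fin K, seq (k+1) = seq k - Pi.single u 1 + Pi.single v 1) ∧
        F (seq (k+1)) < F (seq k) ∧
        (∀ u v : Fin K, seq k - Pi.single u 1 + Pi.single v 1 ∈ B →
          F (seq (k+1)) ≤ F (seq k - Pi.single u 1 + Pi.single v 1)))
    -- otherwise it stops
    (hstop : ∀ k,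
      (¬ ∃ u v : Fin K, seq k - Pi.single u 1 + Pi.single v 1 ∈ B ∧
          F (seq k - Pi.single u 1 + Pi.single v 1) < F (seq k)) →
        seq (k+1) = seq k) :
    ∃ xstar ∈ B, (∀ y ∈ B, F xstar ≤ F y) ∧
      ∃ N : ℕ, 2 * (N : ℤ) ≤ ∑ j, |seq 0 j - xstar j| ∧
        ∀ m, N ≤ m → seq m = xstar := by
  classical
  -- translate the hypotheses into the `exch` language
  have hex' : ∀ x ∈ B, ∀ y ∈ B, ∀ u : Fin K, y u < x u →
      ∃ v : Fin K, x v < y v ∧ exch x u v ∈ B := hex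
  set P : (Fin K → ℤ) → Prop := fun z => ∀ y ∈ B, F z ≤ F y with hPdef
  obtain ⟨m0, hm0B, hm0⟩ := Finset.exists_min_image B F hne
  have hBoptne : (B.filter P).Nonempty := ⟨m0, Finset.mem_filter.mpr ⟨hm0B, hm0⟩⟩
  set nd : (Fin K → ℤ) → ℤ :=
    fun x => ((B.filter P).image (dist' x)).min' (hBoptne.image _) with hnddef
  have hnd_ex : ∀ x, ∃ z ∈ B, P z ∧ dist' x z = nd x := by
    intro x
    have h := Finset.min'_mem ((B.filter P).image (dist' x)) (hBoptne.image _)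
    rw [Finset.mem_image] at h
    obtain ⟨z, hz, hzeq⟩ := h
    rw [Finset.mem_filter] at hz
    exact ⟨z, hz.1, hz.2, hzeq⟩
  have hnd_le : ∀ x z, z ∈ B → P z → nd x ≤ dist' x z := fun x z hzB hzP =>
    Finset.min'_le _ _ (Finset.mem_image_of_mem _ (Finset.mem_filter.mpr ⟨hzB, hzP⟩))
  have hnd_nonneg : ∀ x, 0 ≤ nd x := by
    intro x
    obtain ⟨z, _, _, hzeq⟩ := hnd_ex x
    rw [← hzeq]
    exact dist'_nonneg _ _
  -- one steepest-descent step decreases the distance to the minimizer set by 2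
  have hdesc : ∀ k, ¬ P (seq k) → nd (seq (k+1)) ≤ nd (seq k) - 2 := by
    intro k hk
    have himp : ∃ u v : Fin K, seq k - Pi.single u 1 + Pi.single v 1 ∈ B ∧
        F (seq k - Pi.single u 1 + Pi.single v 1) < F (seq k) := by
      by_contra h
      push_neg at h
      apply hk
      intro y hy
      exact local_global f F hex' hconv hF (hmem k)
        (fun u v hB => h u v hB) (dist' (seq k) y).toNat y hy (le_refl _)
    obtain ⟨hmove, hdec, hbst⟩ := hstep k himp
    obtain ⟨u, v, hequ⟩ := hmove
    have hequ' : seq (k+1) = exch (seq k) u v := hequ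
    have hx1B : exch (seq k) u v ∈ B := by rw [← hequ']; exact hmem (k+1)
    have hlt' : F (exch (seq k) u v) < F (seq k) := by rw [← hequ']; exact hdec
    have hbest' : ∀ p q, exch (seq k) p q ∈ B →
        F (exch (seq k) u v) ≤ F (exch (seq k) p q) := by
      intro p q hpq
      have h1 := hbst p q hpq
      rw [hequ'] at h1
      exact h1
    obtain ⟨ms, hmsB, hmsP, hmseq⟩ := hnd_ex (seq k)
    have hmin : ∀ w ∈ B, (∀ y ∈ B, F w ≤ F y) → dist' (seq k) ms ≤ dist' (seq k) w := by
      intro w hw hwopt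
      rw [hmseq]
      exact hnd_le (seq k) w hw hwopt
    obtain ⟨z, hzB, hzP, hzd⟩ :=
      steep f F hex' hconv hF (hmem k) hx1B hlt' hbest' hmsB hmsP hmin
    have h1 : nd (seq (k+1)) ≤ dist' (seq (k+1)) z := hnd_le _ z hzB hzP
    have h2 : dist' (seq (k+1)) z ≤ dist' (seq k) ms - 2 := by
      rw [hequ']; exact hzd
    rw [hmseq] at h2
    linarith
  -- the sequence reaches a minimizer
  have hreach : ∀ n : ℕ, ∀ k, nd (seq k) ≤ (n : ℤ) → ∃ i, P (seq (k+i)) := by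
    intro n
    induction n with
    | zero =>
      intro k hk
      by_cases h : P (seq k)
      · exact ⟨0, h⟩
      · exfalso
        have h1 := hdesc k h
        have h2 := hnd_nonneg (seq (k+1))
        omega
    | succ n ih =>
      intro k hk
      by_cases h : P (seq k)
      · exact ⟨0, h⟩
      · have h1 := hdesc k h
        obtain ⟨i, hi⟩ := ih (k+1) (by push_cast at hk ⊢; linarith)
        refine ⟨i+1, ?_⟩
        have he : k + (i+1) = (k+1) + i := by omega
        rw [he]
        exact hi
  have hexist : ∃ k, P (seq k) := by
    obtain ⟨i, hi⟩ := hreach (nd (seq 0)).toNat 0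
      (by rw [Int.toNat_of_nonneg (hnd_nonneg (seq 0))])
    exact ⟨0 + i, hi⟩
  set N := Nat.find hexist with hNdef
  have hPN : P (seq N) := Nat.find_spec hexist
  have hnotP : ∀ i, i < N → ¬ P (seq i) := fun i hi => Nat.find_min hexist hi
  have hbound : ∀ i, i ≤ N → 2 * (i:ℤ) + nd (seq i) ≤ nd (seq 0) := by
    intro i
    induction i with
    | zero => intro _; simp
    | succ i ih =>
      intro hsi
      have h1 := hdesc i (hnotP i (by omega))
      have h2 := ih (by omega)
      push_cast
      push_cast at h2
      linarith
  have h2N : 2 * (N:ℤ) ≤ dist' (seq 0) (seq N) := by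
    have h1 := hbound N (le_refl N)
    have h2 := hnd_nonneg (seq N)
    have h3 := hnd_le (seq 0) (seq N) (hmem N) hPN
    linarith
  have hstab : ∀ m, N ≤ m → seq m = seq N := by
    intro m hm
    induction m, hm using Nat.le_induction with
    | base => rfl
    | succ m hm ih =>
      have hns : ¬ ∃ u v : Fin K, seq m - Pi.single u 1 + Pi.single v 1 ∈ B ∧
          F (seq m - Pi.single u 1 + Pi.single v 1) < F (seq m) := by
        rintro ⟨u, v, hB, hFlt⟩
        rw [ih] at hB hFlt
        have := hPN _ hB
        linarith
      rw [hstop m hns]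
      exact ih
  exact ⟨seq N, hmem N, hPN, N, h2N, hstab⟩
end

section
/- If x and y are both global minimizers of a separable discretely convex function f over an M-convex set B, then any point obtained from x by a single exchange toward y that stays in B is also a global minimizer: for all u with x_u > y_u there exists v with x_v < y_v such that x − e_u + e_v ∈ B and f(x − e_u + e_v) = f(x). -/
private lemma slope_mono' {f : ℤ → ℝ} (hconv : ∀ t : ℤ, 2 * f t ≤ f (t - 1) + f (t + 1))
    {s t : ℤ} (h : s ≤ t) : f (s + 1) - f s ≤ f (t + 1) - f t := by
  refine Int.le_induction (motive := fun t _ => f (s + 1) - f s ≤ f (t + 1) - f t) le_rfl ?_ t h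
  intro n hn ih
  have h2 := hconv (n + 1)
  have e : (n : ℤ) + 1 - 1 = n := by ring
  rw [e] at h2
  linarith

private lemma sum_exchange' {K : ℕ} (f : Fin K → ℤ → ℝ) (x : Fin K → ℤ) {a b : Fin K} (hab : a ≠ b) :
    (∑ j, f j ((x - Pi.single a 1 + Pi.single b 1 : Fin K → ℤ) j))
      = (∑ j, f j (x j)) + (f a (x a - 1) - f a (x a)) + (f b (x b + 1) - f b (x b)) := by
  classical
  have hz : ∀ j : Fin K, (x - Pi.single a 1 + Pi.single b 1 : Fin K → ℤ) j
      = x j - (if j = a then 1 else 0) + (if j = b then 1 else 0) := by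
    intro j; simp [Pi.single_apply]
  have key : (∑ j, (f j ((x - Pi.single a 1 + Pi.single b 1 : Fin K → ℤ) j) - f j (x j)))
      = (f a (x a - 1) - f a (x a)) + (f b (x b + 1) - f b (x b)) := by
    rw [← Finset.sum_subset (Finset.subset_univ ({a, b} : Finset (Fin K)))]
    · rw [Finset.sum_pair hab, hz a, hz b]
      simp [hab, Ne.symm hab]
    · intro j _ hj
      simp only [Finset.mem_insert, Finset.mem_singleton, not_or] at hj
      rw [hz j]
      simp [hj.1, hj.2]
  rw [Finset.sum_sub_distrib] at key
  linarith

private lemma single_apply_ne' {K : ℕ} {a j : Fin K} (h : j ≠ a) :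
    (Pi.single a 1 : Fin K → ℤ) j = 0 := by
  simp [Pi.single_apply, h]

private lemma aux_exchange {K : ℕ} (B : Set (Fin K → ℤ))
    (hex : ∀ x ∈ B, ∀ y ∈ B, ∀ u : Fin K, y u < x u →
      ∃ v : Fin K, x v < y v ∧ x - Pi.single u 1 + Pi.single v 1 ∈ B)
    (f : Fin K → ℤ → ℝ)
    (hconv : ∀ j : Fin K, ∀ t : ℤ, 2 * f j t ≤ f j (t - 1) + f j (t + 1)) :
    ∀ d : ℕ, ∀ x y : Fin K → ℤ, x ∈ B → y ∈ B →
    (∀ z ∈ B, ∑ j, f j (x j) ≤ ∑ j, f j (z j)) →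
    (∀ z ∈ B, ∑ j, f j (y j) ≤ ∑ j, f j (z j)) →
    (∑ j, (x j - y j).natAbs) < d →
    ∀ u : Fin K, y u < x u →
    ∃ v : Fin K, x v < y v ∧ x - Pi.single u 1 + Pi.single v 1 ∈ B ∧
      (∑ j, f j ((x - Pi.single u 1 + Pi.single v 1 : Fin K → ℤ) j)) = ∑ j, f j (x j) := by
  intro d
  induction d with
  | zero => intro x y _ _ _ _ hd u hu; omega
  | succ d ih =>
    intro x y hx hy hxmin hymin hd u hu
    classical
    -- build the alternating chain
    have step : ∀ c : {c : Fin K // y c < x c},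
        ∃ p : Fin K × {c : Fin K // y c < x c},
          x p.1 < y p.1 ∧ (x - Pi.single c.1 1 + Pi.single p.1 1 ∈ B) ∧
            (y - Pi.single p.1 1 + Pi.single p.2.1 1 ∈ B) := by
      rintro ⟨c, hc⟩
      obtain ⟨b, hb, hbB⟩ := hex x hx y hy c hc
      obtain ⟨c', hc', hc'B⟩ := hex y hy x hx b hb
      exact ⟨(b, ⟨c', hc'⟩), hb, hbB, hc'B⟩
    choose nxt hb1 hb2 hb3 using step
    set cs : ℕ → {c : Fin K // y c < x c} :=
      fun i => (fun c => (nxt c).2)^[i] ⟨u, hu⟩ with hcs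
    have hcs0 : (cs 0).1 = u := rfl
    have hcssucc : ∀ i, cs (i + 1) = (nxt (cs i)).2 := by
      intro i
      simp only [hcs, Function.iterate_succ_apply']
    set bs : ℕ → Fin K := fun i => (nxt (cs i)).1 with hbs
    have hxb : ∀ i, x (bs i) < y (bs i) := fun i => hb1 (cs i)
    have hxB : ∀ i, x - Pi.single (cs i).1 1 + Pi.single (bs i) 1 ∈ B := fun i => hb2 (cs i)
    have hyB : ∀ i, y - Pi.single (bs i) 1 + Pi.single (cs (i + 1)).1 1 ∈ B := by
      intro i; rw [hcssucc]; exact hb3 (cs i)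
    -- slope quantities
    set Φ : ℕ → ℝ := fun i => f (cs i).1 (x (cs i).1) - f (cs i).1 (x (cs i).1 - 1) with hΦ
    set Ψ : ℕ → ℝ := fun i => f (bs i) (x (bs i) + 1) - f (bs i) (x (bs i)) with hΨ
    set Ψ' : ℕ → ℝ := fun i => f (bs i) (y (bs i)) - f (bs i) (y (bs i) - 1) with hΨ'
    set A : ℕ → ℝ := fun i => f (cs (i + 1)).1 (y (cs (i + 1)).1 + 1) - f (cs (i + 1)).1 (y (cs (i + 1)).1) with hA
    have keyx : ∀ i, Φ i ≤ Ψ i := by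
      intro i
      have hne : (cs i).1 ≠ bs i := by
        intro h
        have h1 := (cs i).2
        have h2 := hxb i
        rw [h] at h1
        omega
      have hmem := hxmin _ (hxB i)
      rw [sum_exchange' f x hne] at hmem
      simp only [hΦ, hΨ]
      linarith
    have keyy : ∀ i, Ψ' i ≤ A i := by
      intro i
      have hne : bs i ≠ (cs (i + 1)).1 := by
        intro h
        have h1 := (cs (i + 1)).2
        have h2 := hxb i
        rw [← h] at h1
        omega
      have hmem := hymin _ (hyB i)
      rw [sum_exchange' f y hne] at hmem
      simp only [hΨ', hA]
      linarith
    have bridge1 : ∀ i, Ψ i ≤ Ψ' i := by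
      intro i
      have h := slope_mono' (hconv (bs i)) (s := x (bs i)) (t := y (bs i) - 1)
        (by have := hxb i; omega)
      have e : y (bs i) - 1 + 1 = y (bs i) := by ring
      rw [e] at h
      exact h
    have bridge2 : ∀ i, A i ≤ Φ (i + 1) := by
      intro i
      have h := slope_mono' (hconv (cs (i + 1)).1) (s := y (cs (i + 1)).1)
        (t := x (cs (i + 1)).1 - 1) (by have := (cs (i + 1)).2; omega)
      have e : x (cs (i + 1)).1 - 1 + 1 = x (cs (i + 1)).1 := by ring
      rw [e] at h
      exact h
    have mono : Monotone Φ := monotone_nat_of_le_succ (fun i => by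
      have := keyx i; have := keyy i; have := bridge1 i; have := bridge2 i; linarith)
    -- pigeonhole
    obtain ⟨i1, j1, hne1, heq1⟩ :=
      Fintype.exists_ne_map_eq_of_card_lt (fun i : Fin (K + 1) => (cs i.1).1) (by simp)
    obtain ⟨i0, j0, hij, heq⟩ : ∃ i0 j0 : ℕ, i0 < j0 ∧ (cs i0).1 = (cs j0).1 := by
      rcases lt_or_gt_of_ne (fun h => hne1 (by exact Fin.ext (by exact_mod_cast congrArg Fin.val h))) with h | h
      · exact ⟨i1.1, j1.1, h, heq1⟩
      · exact ⟨j1.1, i1.1, h, heq1.symm⟩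
    have hΦeq : Φ i0 = Φ j0 := by simp only [hΦ]; rw [heq]
    have hflat : ∀ l, i0 ≤ l → l ≤ j0 → Φ l = Φ i0 :=
      fun l h1 h2 => le_antisymm (hΦeq ▸ mono h2) (mono h1)
    have tight : ∀ l, i0 ≤ l → l < j0 → Ψ l = Φ l ∧ A l = Ψ' l := by
      intro l h1 h2
      have e1 : Φ l = Φ i0 := hflat l h1 (le_of_lt h2)
      have e2 : Φ (l + 1) = Φ i0 := hflat (l + 1) (by omega) (by omega)
      have := keyx l; have := keyy l; have := bridge1 l; have := bridge2 l
      constructor <;> linarith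
    by_cases hcase : ∃ l, i0 ≤ l ∧ l < j0 ∧ (cs l).1 = u
    · -- Case A: u occurs in the tight segment
      obtain ⟨l, hl1, hl2, hlu⟩ := hcase
      refine ⟨bs l, hxb l, ?_, ?_⟩
      · have := hxB l; rwa [hlu] at this
      · have hne : u ≠ bs l := by
          intro h
          have := hxb l
          rw [← h] at this
          omega
        rw [sum_exchange' f x hne]
        have ht := (tight l hl1 hl2).1
        simp only [hΨ, hΦ, hlu] at ht
        linarith
    · -- Case B: recurse with a closer minimizer y'
      push_neg at hcase
      set b0 : Fin K := bs i0 with hb0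
      set c0 : Fin K := (cs (i0 + 1)).1 with hc0
      have hb0c0 : b0 ≠ c0 := by
        intro h
        have h1 := hxb i0
        have h2 := (cs (i0 + 1)).2
        rw [← hb0] at h1
        rw [← hc0] at h2
        rw [h] at h1
        omega
      set y' : Fin K → ℤ := y - Pi.single b0 1 + Pi.single c0 1 with hy'def
      have hy' : y' ∈ B := hyB i0
      have hfy' : (∑ j, f j (y' j)) = ∑ j, f j (y j) := by
        rw [hy'def, sum_exchange' f y hb0c0]
        have ht := (tight i0 le_rfl hij).2
        simp only [hA, hΨ'] at ht
        linarith
      have hymin' : ∀ z ∈ B, ∑ j, f j (y' j) ≤ ∑ j, f j (z j) := by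
        intro z hz; rw [hfy']; exact hymin z hz
      have hub0 : u ≠ b0 := by
        intro h
        have := hxb i0
        rw [← hb0] at this
        rw [← h] at this
        omega
      have huc0 : u ≠ c0 := by
        intro h
        rcases eq_or_lt_of_le (Nat.succ_le_of_lt hij) with h2 | h2
        · exact hcase i0 le_rfl hij (by rw [heq, ← h2, ← hc0, ← h])
        · exact hcase (i0 + 1) (by omega) h2 (by rw [← hc0, ← h])
      have hy'u : y' u = y u := by
        rw [hy'def]
        simp only [Pi.add_apply, Pi.sub_apply]
        rw [single_apply_ne' hub0, single_apply_ne' huc0]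
        ring
      have hy'j : ∀ j : Fin K, y' j = y j - (if j = b0 then 1 else 0) + (if j = c0 then 1 else 0) := by
        intro j; rw [hy'def]; simp [Pi.single_apply]
      have hdist : (∑ j, (x j - y' j).natAbs) < ∑ j, (x j - y j).natAbs := by
        apply Finset.sum_lt_sum
        · intro j _
          rw [hy'j j]
          rcases eq_or_ne j b0 with h | h
          · subst h
            have := hxb i0
            rw [← hb0] at this
            rw [if_pos rfl, if_neg hb0c0]
            omega
          · rw [if_neg h]
            rcases eq_or_ne j c0 with h2 | h2
            · subst h2
              have := (cs (i0 + 1)).2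
              rw [if_pos rfl]
              rw [← hc0] at this
              omega
            · rw [if_neg h2]; omega
        · refine ⟨b0, Finset.mem_univ _, ?_⟩
          rw [hy'j b0, if_pos rfl, if_neg hb0c0]
          have := hxb i0
          rw [← hb0] at this
          omega
      obtain ⟨v, hv1, hv2, hv3⟩ := ih x y' hx hy' hxmin hymin' (by omega) u (by rw [hy'u]; exact hu)
      refine ⟨v, ?_, hv2, hv3⟩
      have hvc0 : v ≠ c0 := by
        intro h
        rw [hy'j v, h, if_neg (Ne.symm hb0c0), if_pos rfl] at hv1
        have := (cs (i0 + 1)).2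
        rw [← hc0] at this
        omega
      rw [hy'j v, if_neg hvc0] at hv1
      rcases eq_or_ne v b0 with h | h
      · rw [if_pos h] at hv1; omega
      · rw [if_neg h] at hv1; omega

/-- Any single exchange between two global minimizers that stays in the
M-convex set is itself a global minimizer. -/
theorem exchange_between_minimizers {K : ℕ} (hK : 0 < K)
    (B : Set (Fin K → ℤ)) (hne : B.Nonempty)
    (hex : ∀ x ∈ B, ∀ y ∈ B, ∀ u : Fin K, y u < x u →
      ∃ v : Fin K, x v < y v ∧ x - Pi.single u 1 + Pi.single v 1 ∈ B)
    (f : Fin K → ℤ → ℝ)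
    (hconv : ∀ j : Fin K, ∀ t : ℤ, 2 * f j t ≤ f j (t - 1) + f j (t + 1))
    (x y : Fin K → ℤ) (hx : x ∈ B) (hy : y ∈ B)
    (hxmin : ∀ z ∈ B, ∑ j, f j (x j) ≤ ∑ j, f j (z j))
    (hymin : ∀ z ∈ B, ∑ j, f j (y j) ≤ ∑ j, f j (z j))
    (u : Fin K) (hu : y u < x u) :
    ∃ v : Fin K, x v < y v ∧ x - Pi.single u 1 + Pi.single v 1 ∈ B ∧
      (∑ j, f j ((x - Pi.single u 1 + Pi.single v 1 : Fin K → ℤ) j)) = ∑ j, f j (x j) := by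
  exact aux_exchange B hex f hconv ((∑ j, (x j - y j).natAbs) + 1) x y hx hy hxmin hymin
    (by omega) u hu
end
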